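/- arXiv:1008.3934 — 5 statements merged into one kernel-verified Lean document; each statement's English description precedes it below -/
import Mathlib

section
/- (Lee–Yang circle theorem.) Let n ≥ 1 and let x : Fin n → Fin n → ℝ be symmetric (x_{αβ} = x_{βα}) with |x_{αβ}| ≤ 1 for all α ≠ β. For 0 ≤ γ ≤ n define Q_γ = Σ_{a ⊆ {1,…,n}, |a| = γ} Π_{α ∈ a} Π_{β ∉ a} x_{αβ}, and let Q(z) = Σ_{γ=0}^{n} Q_γ z^γ, a polynomial with real coefficients (note Q_0 = Q_n = 1). Then every complex root z of Q satisfies |z| = 1. -/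
open Finset
set_option linter.unusedSectionVars false
set_option maxHeartbeats 1000000
section
variable {ι : Type*} [DecidableEq ι]

noncomputable def Complex.abs : AbsoluteValue ℂ ℝ :=
  IsAbsoluteValue.toAbsoluteValue (norm : ℂ → ℝ)

lemma Complex.abs_apply (z : ℂ) : Complex.abs z = Real.sqrt (Complex.normSq z) := rfl

lemma Complex.abs_eq_norm (z : ℂ) : Complex.abs z = ‖z‖ := rfl

noncomputable def Ev (S : Finset ι) (c : Finset ι → ℂ) (z : ι → ℂ) : ℂ :=
  ∑ a ∈ S.powerset, c a * ∏ i ∈ a, z i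

def sec (i : ι) (c : Finset ι → ℂ) : Finset ι → ℂ := fun a => c (insert i a)

def GOOD (S : Finset ι) (c : Finset ι → ℂ) : Prop :=
  if S = ∅ then c ∅ ≠ 0
  else ∀ i ∈ S, GOOD (S.erase i) (sec i c) ∧
    ∀ z : ι → ℂ, (∀ j ∈ S.erase i, 1 < Complex.abs (z j)) →
      Complex.abs (Ev (S.erase i) c z) ≤ Complex.abs (Ev (S.erase i) (sec i c) z)
termination_by S.card
decreasing_by exact Finset.card_erase_lt_of_mem ‹i ∈ S›

lemma GOOD_empty (c : Finset ι → ℂ) : GOOD (∅ : Finset ι) c ↔ c ∅ ≠ 0 := by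
  rw [GOOD]; simp

lemma GOOD_nonempty {S : Finset ι} (hS : S ≠ ∅) (c : Finset ι → ℂ) :
    GOOD S c ↔ ∀ i ∈ S, GOOD (S.erase i) (sec i c) ∧
    ∀ z : ι → ℂ, (∀ j ∈ S.erase i, 1 < Complex.abs (z j)) →
      Complex.abs (Ev (S.erase i) c z) ≤ Complex.abs (Ev (S.erase i) (sec i c) z) := by
  rw [GOOD]; simp [hS]

lemma Ev_congr {S : Finset ι} {c c' : Finset ι → ℂ} (h : ∀ a ⊆ S, c a = c' a)
    (z : ι → ℂ) : Ev S c z = Ev S c' z := by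
  unfold Ev
  exact Finset.sum_congr rfl fun a ha => by rw [h a (Finset.mem_powerset.mp ha)]

private lemma GOOD_congr_aux : ∀ k : ℕ, ∀ S : Finset ι, S.card ≤ k →
    ∀ {c c' : Finset ι → ℂ}, (∀ a ⊆ S, c a = c' a) → GOOD S c → GOOD S c' := by
  intro k
  induction k with
  | zero =>
    intro S hS c c' h hg
    rw [Nat.le_zero, Finset.card_eq_zero] at hS
    subst hS
    rw [GOOD_empty] at hg ⊢
    rw [← h ∅ (by simp)]; exact hg
  | succ k ih =>
    intro S hS c c' h hg
    rcases eq_or_ne S ∅ with rfl | hne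
    · rw [GOOD_empty] at hg ⊢
      rw [← h ∅ (by simp)]; exact hg
    · rw [GOOD_nonempty hne] at hg ⊢
      intro i hi
      obtain ⟨h1, h2⟩ := hg i hi
      have hcard : (S.erase i).card ≤ k := by
        have := Finset.card_erase_lt_of_mem hi
        omega
      have hsub : ∀ a ⊆ S.erase i, a ⊆ S := fun a ha => ha.trans (Finset.erase_subset i S)
      constructor
      · refine ih (S.erase i) hcard (fun a ha => ?_) h1
        exact h (insert i a) (Finset.insert_subset hi (hsub a ha))
      · intro z hz
        rw [← Ev_congr (fun a ha => h a (hsub a ha)) z,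
          ← Ev_congr (c := sec i c) (c' := sec i c') (fun a ha => h (insert i a) (Finset.insert_subset hi (hsub a ha))) z]
        exact h2 z hz

lemma GOOD_congr {S : Finset ι} {c c' : Finset ι → ℂ} (h : ∀ a ⊆ S, c a = c' a)
    (hg : GOOD S c) : GOOD S c' := GOOD_congr_aux S.card S le_rfl h hg

lemma Ev_split {S : Finset ι} {i : ι} (hi : i ∈ S) (c : Finset ι → ℂ) (z : ι → ℂ) :
    Ev S c z = Ev (S.erase i) c z + z i * Ev (S.erase i) (sec i c) z := by
  unfold Ev
  have hiS : i ∉ S.erase i := Finset.notMem_erase i S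
  have hS : S = insert i (S.erase i) := (Finset.insert_erase hi).symm
  conv_lhs => rw [hS, Finset.sum_powerset_insert hiS]
  congr 1
  rw [Finset.mul_sum]
  refine Finset.sum_congr rfl fun a ha => ?_
  have hia : i ∉ a := fun h => hiS (Finset.mem_powerset.mp ha h)
  rw [Finset.prod_insert hia, sec]
  ring

private lemma GOOD_nonvanish_aux : ∀ k : ℕ, ∀ S : Finset ι, S.card ≤ k →
    ∀ {c : Finset ι → ℂ}, GOOD S c → ∀ z : ι → ℂ, (∀ j ∈ S, 1 < Complex.abs (z j)) →
      Ev S c z ≠ 0 := by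
  intro k
  induction k with
  | zero =>
    intro S hS c hg z _
    rw [Nat.le_zero, Finset.card_eq_zero] at hS; subst hS
    rw [GOOD_empty] at hg
    simpa [Ev] using hg
  | succ k ih =>
    intro S hS c hg z hz
    rcases eq_or_ne S ∅ with rfl | hne
    · rw [GOOD_empty] at hg; simpa [Ev] using hg
    · obtain ⟨i, hi⟩ := Finset.nonempty_iff_ne_empty.mpr hne
      rw [GOOD_nonempty hne] at hg
      obtain ⟨h1, h2⟩ := hg i hi
      have hcard : (S.erase i).card ≤ k := by
        have := Finset.card_erase_lt_of_mem hi; omega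
      have hz' : ∀ j ∈ S.erase i, 1 < Complex.abs (z j) :=
        fun j hj => hz j (Finset.mem_of_mem_erase hj)
      have hB : Ev (S.erase i) (sec i c) z ≠ 0 := ih (S.erase i) hcard h1 z hz'
      rw [Ev_split hi]
      intro hcon
      have hABs := h2 z hz'
      have h1i : 1 < Complex.abs (z i) := hz i hi
      have : Complex.abs (Ev (S.erase i) c z) = Complex.abs (z i) * Complex.abs (Ev (S.erase i) (sec i c) z) := by
        have : Ev (S.erase i) c z = -(z i * Ev (S.erase i) (sec i c) z) := by linear_combination hcon
        rw [this, map_neg_eq_map, map_mul]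
      have hBpos : 0 < Complex.abs (Ev (S.erase i) (sec i c) z) :=
        AbsoluteValue.pos Complex.abs hB
      nlinarith
lemma GOOD_nonvanish {S : Finset ι} {c : Finset ι → ℂ} (hg : GOOD S c) (z : ι → ℂ)
    (hz : ∀ j ∈ S, 1 < Complex.abs (z j)) : Ev S c z ≠ 0 :=
  GOOD_nonvanish_aux S.card S le_rfl hg z hz
def prodC (S T : Finset ι) (c d : Finset ι → ℂ) : Finset ι → ℂ :=
  fun a => c (a ∩ S) * d (a ∩ T)

lemma Ev_prod {S T : Finset ι} (hST : Disjoint S T) (c d : Finset ι → ℂ) (z : ι → ℂ) :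
    Ev (S ∪ T) (prodC S T c d) z = Ev S c z * Ev T d z := by
  unfold Ev prodC
  rw [Finset.sum_mul_sum, ← Finset.sum_product']
  refine Finset.sum_nbij' (fun a => (a ∩ S, a ∩ T)) (fun p => p.1 ∪ p.2) ?_ ?_ ?_ ?_ ?_
  · intro a ha
    rw [Finset.mem_powerset] at ha
    simp only [Finset.mem_product, Finset.mem_powerset]
    exact ⟨Finset.inter_subset_right, Finset.inter_subset_right⟩
  · intro p hp
    rw [Finset.mem_product, Finset.mem_powerset, Finset.mem_powerset] at hp
    rw [Finset.mem_powerset]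
    exact Finset.union_subset (hp.1.trans Finset.subset_union_left)
      (hp.2.trans Finset.subset_union_right)
  · intro a ha
    rw [Finset.mem_powerset] at ha
    simp only []
    rw [← Finset.inter_union_distrib_left]
    exact Finset.inter_eq_left.mpr ha
  · intro p hp
    rw [Finset.mem_product, Finset.mem_powerset, Finset.mem_powerset] at hp
    have h1 : (p.1 ∪ p.2) ∩ S = p.1 := by
      rw [Finset.union_inter_distrib_right, Finset.inter_eq_left.mpr hp.1,
        Finset.disjoint_iff_inter_eq_empty.mp (Finset.disjoint_of_subset_left hp.2 hST.symm),
        Finset.union_empty]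
    have h2 : (p.1 ∪ p.2) ∩ T = p.2 := by
      rw [Finset.union_inter_distrib_right, Finset.inter_eq_left.mpr hp.2,
        Finset.disjoint_iff_inter_eq_empty.mp (Finset.disjoint_of_subset_left hp.1 hST),
        Finset.empty_union]
    ext <;> simp [h1, h2]
  · intro a ha
    rw [Finset.mem_powerset] at ha
    have hdis : Disjoint (a ∩ S) (a ∩ T) :=
      Finset.disjoint_of_subset_left Finset.inter_subset_right
        (Finset.disjoint_of_subset_right Finset.inter_subset_right hST)
    have : a = (a ∩ S) ∪ (a ∩ T) := by
      rw [← Finset.inter_union_distrib_left]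
      exact (Finset.inter_eq_left.mpr ha).symm
    have hprod : ∏ x ∈ a, z x = (∏ x ∈ a ∩ S, z x) * ∏ x ∈ a ∩ T, z x := by
      conv_lhs => rw [this]
      exact Finset.prod_union hdis
    rw [hprod]
    ring
lemma prodC_comm (S T : Finset ι) (c d : Finset ι → ℂ) :
    prodC S T c d = prodC T S d c := by
  funext a; simp [prodC, mul_comm]

lemma sec_prodC_left {S T : Finset ι} {i : ι} (hiS : i ∈ S) (hiT : i ∉ T)
    (c d : Finset ι → ℂ) : sec i (prodC S T c d) = prodC S T (sec i c) d := by
  funext a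
  simp only [sec, prodC, Finset.insert_inter_of_mem hiS, Finset.insert_inter_of_notMem hiT]

lemma prodC_erase_agree {S T : Finset ι} {i : ι} (c d : Finset ι → ℂ) :
    ∀ a ⊆ (S.erase i) ∪ T, i ∉ T → prodC (S.erase i) T c d a = prodC S T c d a := by
  intro a ha hiT
  have hia : i ∉ a := by
    intro h
    rcases Finset.mem_union.mp (ha h) with h' | h'
    · exact (Finset.notMem_erase i S) h'
    · exact hiT h'
  have : a ∩ S.erase i = a ∩ S := by
    ext x
    simp only [Finset.mem_inter, Finset.mem_erase]
    constructor
    · rintro ⟨hx, _, hxS⟩; exact ⟨hx, hxS⟩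
    · rintro ⟨hx, hxS⟩; exact ⟨hx, fun h => hia (h ▸ hx), hxS⟩
  simp [prodC, this]

private lemma GOOD_prod_aux : ∀ k : ℕ, ∀ S T : Finset ι, (S ∪ T).card ≤ k →
    ∀ {c d : Finset ι → ℂ}, Disjoint S T → GOOD S c → GOOD T d →
      GOOD (S ∪ T) (prodC S T c d) := by
  intro k
  induction k with
  | zero =>
    intro S T hk c d hST hc hd
    rw [Nat.le_zero, Finset.card_eq_zero, Finset.union_eq_empty] at hk
    obtain ⟨rfl, rfl⟩ := hk
    rw [GOOD_empty] at hc hd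
    rw [Finset.union_empty, GOOD_empty]
    simp only [prodC, Finset.empty_inter]
    exact mul_ne_zero hc hd
  | succ k ih =>
    intro S T hk c d hST hc hd
    rcases eq_or_ne (S ∪ T) ∅ with he | hne
    · rw [Finset.union_eq_empty] at he
      obtain ⟨rfl, rfl⟩ := he
      rw [GOOD_empty] at hc hd
      rw [Finset.union_empty, GOOD_empty]
      simp only [prodC, Finset.empty_inter]
      exact mul_ne_zero hc hd
    · rw [GOOD_nonempty hne]
      -- main claim for i in the left factor
      have main : ∀ S T : Finset ι, ∀ c d : Finset ι → ℂ, (S ∪ T).card ≤ k + 1 →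
          Disjoint S T → GOOD S c → GOOD T d → ∀ i ∈ S,
          GOOD ((S ∪ T).erase i) (sec i (prodC S T c d)) ∧
          ∀ z : ι → ℂ, (∀ j ∈ (S ∪ T).erase i, 1 < Complex.abs (z j)) →
            Complex.abs (Ev ((S ∪ T).erase i) (prodC S T c d) z) ≤
            Complex.abs (Ev ((S ∪ T).erase i) (sec i (prodC S T c d)) z) := by
        intro S T c d hk hST hc hd i hiS
        have hiT : i ∉ T := fun h => (Finset.disjoint_left.mp hST hiS) h
        have herase : (S ∪ T).erase i = (S.erase i) ∪ T := by
          rw [Finset.erase_union_distrib, Finset.erase_eq_of_notMem hiT]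
        have hcard : ((S.erase i) ∪ T).card ≤ k := by
          rw [← herase]
          have h1 : ((S ∪ T).erase i).card < (S ∪ T).card :=
            Finset.card_erase_lt_of_mem (Finset.mem_union_left T hiS)
          omega
        have hdis' : Disjoint (S.erase i) T :=
          Finset.disjoint_of_subset_left (Finset.erase_subset i S) hST
        obtain ⟨hc1, hc2⟩ := (GOOD_nonempty (Finset.ne_empty_of_mem hiS) c).mp hc i hiS
        constructor
        · rw [herase, sec_prodC_left hiS hiT]
          have := ih (S.erase i) T hcard hdis' hc1 hd
          exact GOOD_congr (fun a ha => prodC_erase_agree (sec i c) d a ha hiT) this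
        · intro z hz
          rw [herase] at hz ⊢
          have e1 : Ev ((S.erase i) ∪ T) (prodC S T c d) z = Ev (S.erase i) c z * Ev T d z := by
            rw [← Ev_prod hdis']
            exact (Ev_congr (fun a ha => prodC_erase_agree c d a ha hiT) z).symm
          have e2 : Ev ((S.erase i) ∪ T) (sec i (prodC S T c d)) z =
              Ev (S.erase i) (sec i c) z * Ev T d z := by
            rw [sec_prodC_left hiS hiT, ← Ev_prod hdis']
            exact (Ev_congr (fun a ha => prodC_erase_agree (sec i c) d a ha hiT) z).symm
          rw [e1, e2, map_mul, map_mul]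
          have hz' : ∀ j ∈ S.erase i, 1 < Complex.abs (z j) :=
            fun j hj => hz j (Finset.mem_union_left T hj)
          exact mul_le_mul_of_nonneg_right (hc2 z hz') (AbsoluteValue.nonneg _ _)
      intro i hi
      rcases Finset.mem_union.mp hi with hiS | hiT
      · exact main S T c d hk hST hc hd i hiS
      · have := main T S d c (by rwa [Finset.union_comm]) hST.symm hd hc i hiT
        rwa [Finset.union_comm T S, prodC_comm T S d c] at this

lemma GOOD_prod {S T : Finset ι} {c d : Finset ι → ℂ} (hST : Disjoint S T)
    (hc : GOOD S c) (hd : GOOD T d) : GOOD (S ∪ T) (prodC S T c d) :=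
  GOOD_prod_aux (S ∪ T).card S T le_rfl hST hc hd
lemma Ev_congr_z {S : Finset ι} (c : Finset ι → ℂ) {z z' : ι → ℂ}
    (h : ∀ i ∈ S, z i = z' i) : Ev S c z = Ev S c z' := by
  unfold Ev
  refine Finset.sum_congr rfl fun a ha => ?_
  have hsub := Finset.mem_powerset.mp ha
  rw [Finset.prod_congr rfl fun i hi => h i (hsub hi)]

lemma quad_root {a e d : ℂ} (hd : d ≠ 0) (h : 1 < Complex.abs a / Complex.abs d) :
    ∃ u : ℂ, 1 < Complex.abs u ∧ a + e * u + d * u ^ 2 = 0 := by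
  obtain ⟨s, hs⟩ := IsAlgClosed.exists_pow_nat_eq (e ^ 2 - 4 * a * d) (n := 2) (by norm_num)
  set u₁ : ℂ := (-e + s) / (2 * d) with hu₁
  set u₂ : ℂ := (-e - s) / (2 * d) with hu₂
  have h2d : (2 * d) ≠ 0 := mul_ne_zero two_ne_zero hd
  have h4d : (4 * d) ≠ 0 := mul_ne_zero (by norm_num) hd
  have hv₁ : 2 * d * u₁ = -e + s := by rw [hu₁]; exact mul_div_cancel₀ _ h2d
  have hv₂ : 2 * d * u₂ = -e - s := by rw [hu₂]; exact mul_div_cancel₀ _ h2d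
  have key₁ : a + e * u₁ + d * u₁ ^ 2 = 0 := by
    have h : 4 * d * (a + e * u₁ + d * u₁ ^ 2) = 0 := by
      linear_combination (2 * d * u₁ + (-e + s) + 2 * e) * hv₁ + hs
    exact (mul_eq_zero.mp h).resolve_left h4d
  have key₂ : a + e * u₂ + d * u₂ ^ 2 = 0 := by
    have h : 4 * d * (a + e * u₂ + d * u₂ ^ 2) = 0 := by
      linear_combination (2 * d * u₂ + (-e - s) + 2 * e) * hv₂ + hs
    exact (mul_eq_zero.mp h).resolve_left h4d
  have hprod : u₁ * u₂ = a / d := by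
    rw [eq_div_iff hd]
    have h : 4 * d * (u₁ * u₂ * d - a) = 0 := by
      linear_combination (2 * d * u₂) * hv₁ + (-e + s) * hv₂ - hs
    exact sub_eq_zero.mp ((mul_eq_zero.mp h).resolve_left h4d)
  have habs : Complex.abs u₁ * Complex.abs u₂ = Complex.abs a / Complex.abs d := by
    rw [← map_mul, hprod, map_div₀]
  rcases le_or_gt (Complex.abs u₁) 1 with h1 | h1
  · refine ⟨u₂, ?_, key₂⟩
    by_contra hle
    push_neg at hle
    have := mul_le_one₀ h1 (AbsoluteValue.nonneg _ _) hle
    rw [habs] at this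
    linarith
  · exact ⟨u₁, h1, key₁⟩

/-- GOOD gives goodness of the top section -/
lemma GOOD_sec {S : Finset ι} {c : Finset ι → ℂ} (hg : GOOD S c) {i : ι} (hi : i ∈ S) :
    GOOD (S.erase i) (sec i c) :=
  ((GOOD_nonempty (Finset.ne_empty_of_mem hi) c).mp hg i hi).1

lemma GOOD_dom {S : Finset ι} {c : Finset ι → ℂ} (hg : GOOD S c) {i : ι} (hi : i ∈ S) :
    ∀ z : ι → ℂ, (∀ j ∈ S.erase i, 1 < Complex.abs (z j)) →
      Complex.abs (Ev (S.erase i) c z) ≤ Complex.abs (Ev (S.erase i) (sec i c) z) :=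
  ((GOOD_nonempty (Finset.ne_empty_of_mem hi) c).mp hg i hi).2

lemma ASANO_core {S : Finset ι} {c : Finset ι → ℂ} {i j : ι} (hij : i ≠ j)
    (hi : i ∈ S) (hj : j ∈ S) (hg : GOOD S c) (z : ι → ℂ)
    (hz : ∀ k ∈ (S.erase i).erase j, 1 < Complex.abs (z k)) :
    Ev ((S.erase i).erase j) (sec j (sec i c)) z ≠ 0 ∧
    Complex.abs (Ev ((S.erase i).erase j) c z) ≤
      Complex.abs (Ev ((S.erase i).erase j) (sec j (sec i c)) z) := by
  set T := (S.erase i).erase j with hT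
  have hjSi : j ∈ S.erase i := Finset.mem_erase.mpr ⟨(Ne.symm hij), hj⟩
  have hD : Ev T (sec j (sec i c)) z ≠ 0 :=
    GOOD_nonvanish (GOOD_sec (GOOD_sec hg hi) hjSi) z hz
  refine ⟨hD, ?_⟩
  by_contra hAD
  push_neg at hAD
  set A := Ev T c z with hA
  set B := Ev T (sec i c) z with hB
  set C := Ev T (sec j c) z with hC
  set D := Ev T (sec j (sec i c)) z with hDdef
  have hDpos : 0 < Complex.abs D := AbsoluteValue.pos Complex.abs hD
  have hratio : 1 < Complex.abs A / Complex.abs D := (one_lt_div hDpos).mpr hAD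
  obtain ⟨u, hu, hroot⟩ := quad_root (e := B + C) hD hratio
  set z' : ι → ℂ := Function.update (Function.update z i u) j u with hz'
  have hz'i : z' i = u := by
    rw [hz', Function.update_of_ne hij, Function.update_self]
  have hz'j : z' j = u := by rw [hz', Function.update_self]
  have hz'T : ∀ k ∈ T, z k = z' k := by
    intro k hk
    have hkj : k ≠ j := (Finset.mem_erase.mp hk).1
    have hki : k ≠ i := (Finset.mem_erase.mp (Finset.mem_of_mem_erase hk)).1
    rw [hz', Function.update_of_ne hkj, Function.update_of_ne hki]
  have hEvT : ∀ f : Finset ι → ℂ, Ev T f z' = Ev T f z :=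
    fun f => (Ev_congr_z f hz'T).symm
  have hsplit : Ev S c z' = A + (B + C) * u + D * u ^ 2 := by
    rw [Ev_split hi c z', Ev_split hjSi c z', Ev_split hjSi (sec i c) z',
      ← hT, hEvT, hEvT, hEvT, hEvT, hz'i, hz'j, ← hA, ← hB, ← hC, ← hDdef]
    ring
  have hznorm : ∀ k ∈ S, 1 < Complex.abs (z' k) := by
    intro k hk
    rcases eq_or_ne k j with rfl | hkj
    · rwa [hz'j]
    rcases eq_or_ne k i with rfl | hki
    · rwa [hz'i]
    · rw [hz', Function.update_of_ne hkj, Function.update_of_ne hki]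
      exact hz k (Finset.mem_erase.mpr ⟨hkj, Finset.mem_erase.mpr ⟨hki, hk⟩⟩)
  exact GOOD_nonvanish hg z' hznorm (hsplit.trans hroot)

/-- Asano contraction of variables `i` (kept) and `j` (removed) -/
def ctr (i j : ι) (c : Finset ι → ℂ) : Finset ι → ℂ :=
  fun a => if i ∈ a then c (insert j a) else c a

lemma sec_ctr {i j : ι} (hij : i ≠ j) (c : Finset ι → ℂ) :
    sec i (ctr i j c) = sec j (sec i c) := by
  funext a
  simp only [sec, ctr, Finset.mem_insert, true_or, if_true, Finset.insert_comm]

lemma sec_ctr_ne {i j k : ι} (hki : k ≠ i) (hkj : k ≠ j) (c : Finset ι → ℂ) :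
    sec k (ctr i j c) = ctr i j (sec k c) := by
  funext a
  simp only [sec, ctr, Finset.mem_insert, hki.symm, false_or, Finset.insert_comm]

lemma ctr_eq_of_not_mem {i j : ι} {a : Finset ι} (hia : i ∉ a) (c : Finset ι → ℂ) :
    ctr i j c a = c a := by
  simp [ctr, hia]

lemma Ev_ctr {S : Finset ι} {c : Finset ι → ℂ} {i j : ι} (hij : i ≠ j)
    (hi : i ∈ S) (hj : j ∈ S) (z : ι → ℂ) :
    Ev (S.erase j) (ctr i j c) z = Ev ((S.erase i).erase j) c z +
      z i * Ev ((S.erase i).erase j) (sec j (sec i c)) z := by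
  have hiSj : i ∈ S.erase j := Finset.mem_erase.mpr ⟨hij, hi⟩
  have hTT : (S.erase j).erase i = (S.erase i).erase j := Finset.erase_right_comm
  rw [Ev_split hiSj (ctr i j c) z, hTT]
  congr 1
  · exact Ev_congr (fun a ha => ctr_eq_of_not_mem
      (fun h => Finset.notMem_erase i S (Finset.mem_of_mem_erase (ha h))) c) z
  · rw [sec_ctr hij c]

lemma ctr_nonvanish {S : Finset ι} {c : Finset ι → ℂ} {i j : ι} (hij : i ≠ j)
    (hi : i ∈ S) (hj : j ∈ S) (hg : GOOD S c) (z : ι → ℂ)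
    (hz : ∀ k ∈ S.erase j, 1 < Complex.abs (z k)) :
    Ev (S.erase j) (ctr i j c) z ≠ 0 := by
  have hzT : ∀ k ∈ (S.erase i).erase j, 1 < Complex.abs (z k) := by
    intro k hk
    obtain ⟨hkj, hkSi⟩ := Finset.mem_erase.mp hk
    exact hz k (Finset.mem_erase.mpr ⟨hkj, Finset.mem_of_mem_erase hkSi⟩)
  obtain ⟨hD, hAD⟩ := ASANO_core hij hi hj hg z hzT
  rw [Ev_ctr hij hi hj z]
  intro hcon
  have h1 : 1 < Complex.abs (z i) := hz i (Finset.mem_erase.mpr ⟨hij, hi⟩)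
  have heq : Complex.abs (Ev ((S.erase i).erase j) c z) =
      Complex.abs (z i) * Complex.abs (Ev ((S.erase i).erase j) (sec j (sec i c)) z) := by
    have : Ev ((S.erase i).erase j) c z =
        -(z i * Ev ((S.erase i).erase j) (sec j (sec i c)) z) := by linear_combination hcon
    rw [this, map_neg_eq_map, map_mul]
  have hDpos : 0 < Complex.abs (Ev ((S.erase i).erase j) (sec j (sec i c)) z) :=
    AbsoluteValue.pos Complex.abs hD
  nlinarith

private lemma ASANO_aux : ∀ m : ℕ, ∀ S : Finset ι, S.card ≤ m →
    ∀ {c : Finset ι → ℂ} {i j : ι}, i ≠ j → i ∈ S → j ∈ S → GOOD S c →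
      GOOD (S.erase j) (ctr i j c) := by
  intro m
  induction m with
  | zero =>
    intro S hS c i j hij hi hj hg
    rw [Nat.le_zero, Finset.card_eq_zero] at hS
    subst hS
    exact absurd hi (Finset.notMem_empty i)
  | succ m ih =>
    intro S hS c i j hij hi hj hg
    have hiSj : i ∈ S.erase j := Finset.mem_erase.mpr ⟨hij, hi⟩
    have hjSi : j ∈ S.erase i := Finset.mem_erase.mpr ⟨hij.symm, hj⟩
    rw [GOOD_nonempty (Finset.ne_empty_of_mem hiSj)]
    intro k hk
    obtain ⟨hkj, hkS⟩ := Finset.mem_erase.mp hk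
    rcases eq_or_ne k i with rfl | hki
    · -- the contracted variable itself
      constructor
      · rw [sec_ctr hij c, Finset.erase_right_comm]
        exact GOOD_sec (GOOD_sec hg hi) hjSi
      · intro z hz
        rw [sec_ctr hij c]
        have hTT : (S.erase j).erase k = (S.erase k).erase j := Finset.erase_right_comm
        rw [hTT] at hz ⊢
        obtain ⟨hD, hAD⟩ := ASANO_core hij hi hj hg z hz
        calc Complex.abs (Ev ((S.erase k).erase j) (ctr k j c) z)
            = Complex.abs (Ev ((S.erase k).erase j) c z) := by
              rw [Ev_congr (fun a ha => ctr_eq_of_not_mem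
                (fun h => Finset.notMem_erase k S (Finset.mem_of_mem_erase (ha h))) c) z]
          _ ≤ _ := hAD
    · -- a third variable
      have hkSmem : k ∈ S := hkS
      have hgk : GOOD (S.erase k) (sec k c) := GOOD_sec hg hkSmem
      have hcard : (S.erase k).card ≤ m := by
        have := Finset.card_erase_lt_of_mem hkSmem; omega
      have hik : i ∈ S.erase k := Finset.mem_erase.mpr ⟨hki.symm, hi⟩
      have hjk : j ∈ S.erase k := Finset.mem_erase.mpr ⟨fun h => hkj h.symm, hj⟩
      have hIH : GOOD ((S.erase k).erase j) (ctr i j (sec k c)) :=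
        ih (S.erase k) hcard hij hik hjk hgk
      have hsets : (S.erase k).erase j = (S.erase j).erase k := Finset.erase_right_comm
      constructor
      · rw [sec_ctr_ne hki hkj c, ← hsets]
        exact hIH
      · intro z hz
        rw [sec_ctr_ne hki hkj c]
        set A' := Ev ((S.erase j).erase k) (ctr i j c) z with hA'
        set B' := Ev ((S.erase j).erase k) (ctr i j (sec k c)) z with hB'
        have hzk : ∀ l ∈ (S.erase k).erase j, 1 < Complex.abs (z l) := by
          rw [hsets]; exact hz
        have hB'ne : B' ≠ 0 := by
          rw [hB', ← hsets]
          exact GOOD_nonvanish hIH z hzk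
        by_contra hcon
        push_neg at hcon
        have hB'pos : 0 < Complex.abs B' := AbsoluteValue.pos Complex.abs hB'ne
        set lam : ℂ := -A' / B' with hlam
        have hlam1 : 1 < Complex.abs lam := by
          rw [hlam, map_div₀, map_neg_eq_map]
          exact (one_lt_div hB'pos).mpr hcon
        set z' : ι → ℂ := Function.update z k lam with hz'
        have hz'k : z' k = lam := Function.update_self k lam z
        have hz'other : ∀ l ∈ (S.erase j).erase k, z l = z' l := by
          intro l hl
          rw [hz', Function.update_of_ne (Finset.mem_erase.mp hl).1]
        have hsplit : Ev (S.erase j) (ctr i j c) z' = A' + lam * B' := by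
          have hkSj : k ∈ S.erase j := Finset.mem_erase.mpr ⟨hkj, hkSmem⟩
          rw [Ev_split hkSj (ctr i j c) z', sec_ctr_ne hki hkj c, hz'k,
            ← Ev_congr_z (ctr i j c) hz'other, ← Ev_congr_z (ctr i j (sec k c)) hz'other]
        have hzero : Ev (S.erase j) (ctr i j c) z' = 0 := by
          rw [hsplit, hlam]
          field_simp
          ring
        have hz'norm : ∀ l ∈ S.erase j, 1 < Complex.abs (z' l) := by
          intro l hl
          rcases eq_or_ne l k with rfl | hlk
          · rwa [hz'k]
          · rw [hz', Function.update_of_ne hlk]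
            exact hz l (Finset.mem_erase.mpr ⟨hlk, hl⟩)
        exact ctr_nonvanish hij hi hj hg z' hz'norm hzero

lemma ASANO {S : Finset ι} {c : Finset ι → ℂ} {i j : ι} (hij : i ≠ j)
    (hi : i ∈ S) (hj : j ∈ S) (hg : GOOD S c) : GOOD (S.erase j) (ctr i j c) :=
  ASANO_aux S.card S le_rfl hij hi hj hg

private lemma GOOD_one_aux : ∀ m : ℕ, ∀ S : Finset ι, S.card ≤ m →
    GOOD S (fun _ => (1 : ℂ)) := by
  intro m
  induction m with
  | zero =>
    intro S hS
    rw [Nat.le_zero, Finset.card_eq_zero] at hS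
    subst hS
    rw [GOOD_empty]
    norm_num
  | succ m ih =>
    intro S hS
    rcases eq_or_ne S ∅ with rfl | hne
    · rw [GOOD_empty]; norm_num
    · rw [GOOD_nonempty hne]
      intro i hi
      have hsec : sec i (fun _ => (1:ℂ)) = fun _ => (1:ℂ) := rfl
      have hcard : (S.erase i).card ≤ m := by
        have := Finset.card_erase_lt_of_mem hi; omega
      rw [hsec]
      exact ⟨ih _ hcard, fun z _ => le_refl _⟩

lemma GOOD_one (S : Finset ι) : GOOD S (fun _ => (1 : ℂ)) :=
  GOOD_one_aux S.card S le_rfl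

lemma Ev_empty (c : Finset ι → ℂ) (z : ι → ℂ) : Ev ∅ c z = c ∅ := by
  simp [Ev]

lemma Ev_singleton (i : ι) (c : Finset ι → ℂ) (z : ι → ℂ) :
    Ev {i} c z = c ∅ + c {i} * z i := by
  rw [Ev_split (Finset.mem_singleton_self i) c z, Finset.erase_singleton, Ev_empty, Ev_empty]
  rw [show sec i c ∅ = c {i} from rfl]
  ring

lemma key_ineq {t : ℝ} (ht : |t| ≤ 1) {w : ℂ} (hw : 1 < Complex.abs w) :
    Complex.abs (1 + (t:ℂ) * w) ≤ Complex.abs ((t:ℂ) + w) := by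
  have ht2 : t^2 ≤ 1 := by
    have := abs_le.mp ht; nlinarith
  have hw2 : 1 < w.re^2 + w.im^2 := by
    have h1 : (Complex.abs w)^2 = w.re^2 + w.im^2 := by
      rw [Complex.abs_eq_norm, Complex.sq_norm, Complex.normSq_apply]; ring
    nlinarith
  have hns : Complex.normSq (1 + (t:ℂ) * w) ≤ Complex.normSq ((t:ℂ) + w) := by
    simp only [Complex.normSq_apply, Complex.add_re, Complex.add_im, Complex.one_re,
      Complex.one_im, Complex.mul_re, Complex.mul_im, Complex.ofReal_re, Complex.ofReal_im]
    nlinarith [sq_nonneg (1 - t^2), sq_nonneg w.re, sq_nonneg w.im]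
  rw [Complex.abs_apply, Complex.abs_apply]
  exact Real.sqrt_le_sqrt hns

/-- coefficients of the polynomial `1 + t z_i + t z_j + z_i z_j` -/
def cpair (i j : ι) (t : ℝ) : Finset ι → ℂ :=
  fun a => if (i ∈ a ↔ j ∈ a) then 1 else (t:ℂ)

lemma cpair_comm (i j : ι) (t : ℝ) : cpair i j t = cpair j i t := by
  funext a
  by_cases hi : i ∈ a <;> by_cases hj : j ∈ a <;> simp [cpair, hi, hj]

lemma GOOD_cpair {i j : ι} (hij : i ≠ j) {t : ℝ} (ht : |t| ≤ 1) :
    GOOD ({i, j} : Finset ι) (cpair i j t) := by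
  -- helper: the erase computations
  have koyain : ∀ i j : ι, i ≠ j → ({i, j} : Finset ι).erase i = {j} := by
    intro i j hij
    ext x
    simp only [Finset.mem_erase, Finset.mem_insert, Finset.mem_singleton]
    constructor
    · rintro ⟨hx, (rfl | rfl)⟩
      · exact absurd rfl hx
      · rfl
    · rintro rfl
      exact ⟨fun h => hij h.symm, Or.inr rfl⟩
  -- the one-variable analysis, used for both i and j by symmetry
  have main : ∀ i j : ι, i ≠ j →
      GOOD (({i, j} : Finset ι).erase i) (sec i (cpair i j t)) ∧
      ∀ z : ι → ℂ, (∀ l ∈ ({i, j} : Finset ι).erase i, 1 < Complex.abs (z l)) →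
        Complex.abs (Ev (({i, j} : Finset ι).erase i) (cpair i j t) z) ≤
        Complex.abs (Ev (({i, j} : Finset ι).erase i) (sec i (cpair i j t)) z) := by
    intro i j hij
    have her : ({i, j} : Finset ι).erase i = {j} := koyain i j hij
    have hsec : ∀ a, sec i (cpair i j t) a = if j ∈ a then 1 else (t:ℂ) := by
      intro a
      by_cases hj : j ∈ a
      · have h1 : (i ∈ insert i a ↔ j ∈ insert i a) := by
          simp [hj]
        simp only [sec, cpair]
        rw [if_pos h1, if_pos hj]
      · have h2 : ¬ (i ∈ insert i a ↔ j ∈ insert i a) := by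
          simp only [Finset.mem_insert_self, true_iff, Finset.mem_insert]
          rintro (rfl | h)
          · exact hij rfl
          · exact hj h
        simp only [sec, cpair]
        rw [if_neg h2, if_neg hj]
    have hc0 : cpair i j t ∅ = 1 := by simp [cpair]
    have hcj : cpair i j t {j} = (t:ℂ) := by
      have hi : i ∉ ({j} : Finset ι) := by simp [hij]
      simp [cpair, hi]
    have hs0 : sec i (cpair i j t) ∅ = (t:ℂ) := by rw [hsec]; simp
    have hsj : sec i (cpair i j t) {j} = 1 := by rw [hsec]; simp
    constructor
    · rw [her, GOOD_nonempty (by simp : ({j} : Finset ι) ≠ ∅)]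
      intro l hl
      rw [Finset.mem_singleton] at hl
      subst hl
      have herj : ({l} : Finset ι).erase l = ∅ := by simp
      rw [herj]
      constructor
      · rw [GOOD_empty]
        have : sec l (sec i (cpair i l t)) ∅ = 1 := by
          simp [sec, cpair]
        rw [this]
        norm_num
      · intro z _
        rw [Ev_empty, Ev_empty, hs0]
        have : sec l (sec i (cpair i l t)) ∅ = 1 := by
          simp [sec, cpair]
        rw [this]
        simpa [Complex.abs_eq_norm] using ht
    · intro z hz
      rw [her] at hz ⊢
      rw [Ev_singleton, Ev_singleton, hc0, hcj, hs0, hsj, one_mul]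
      have hzj : 1 < Complex.abs (z j) := hz j (Finset.mem_singleton_self j)
      rw [add_comm ((t:ℂ)) (z j)] at *
      calc Complex.abs (1 + (t:ℂ) * z j) ≤ Complex.abs ((t:ℂ) + z j) := key_ineq ht hzj
        _ = Complex.abs (z j + (t:ℂ)) := by rw [add_comm]
  rw [GOOD_nonempty (by simp : ({i, j} : Finset ι) ≠ ∅)]
  intro k hk
  rw [Finset.mem_insert, Finset.mem_singleton] at hk
  rcases hk with rfl | rfl
  · exact main k j hij
  · have := main k i (Ne.symm hij)
    rwa [cpair_comm k i t, Finset.pair_comm k i] at this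

/-- coefficient function of the Lee-Yang polynomial of a graph with edge set `F`
and couplings `w` -/
def cG (F : Finset (ι × ι)) (w : ι × ι → ℝ) : Finset ι → ℂ :=
  fun a => ∏ p ∈ F, (if (p.1 ∈ a ↔ p.2 ∈ a) then 1 else (w p : ℂ))

theorem GOOD_graph (V : Finset ι) (s0 s1 : ι) (hs : s0 ≠ s1) (hs0 : s0 ∉ V) (hs1 : s1 ∉ V)
    (w : ι × ι → ℝ) (hw : ∀ p, |w p| ≤ 1) :
    ∀ F : Finset (ι × ι), (∀ p ∈ F, p.1 ≠ p.2 ∧ p.1 ∈ V ∧ p.2 ∈ V) → GOOD V (cG F w) := by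
  intro F
  induction F using Finset.induction_on with
  | empty =>
    intro _
    have : cG (∅ : Finset (ι × ι)) w = fun _ => (1:ℂ) := by funext a; simp [cG]
    rw [this]
    exact GOOD_one V
  | insert p F hpF ih =>
    intro hedges
    obtain ⟨hpne, hp1, hp2⟩ := hedges p (Finset.mem_insert_self p F)
    have hF : ∀ q ∈ F, q.1 ≠ q.2 ∧ q.1 ∈ V ∧ q.2 ∈ V :=
      fun q hq => hedges q (Finset.mem_insert_of_mem hq)
    have hGF : GOOD V (cG F w) := ih hF
    set α := p.1 with hα
    set β := p.2 with hβ
    set t := w p with htdef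
    -- tensor with the pair polynomial on the scratch variables
    have hdisj : Disjoint V ({s0, s1} : Finset ι) := by
      rw [Finset.disjoint_right]
      intro k hk
      rw [Finset.mem_insert, Finset.mem_singleton] at hk
      rcases hk with rfl | rfl
      · exact hs0
      · exact hs1
    have h1 : GOOD (V ∪ {s0, s1}) (prodC V {s0, s1} (cG F w) (cpair s0 s1 t)) :=
      GOOD_prod hdisj hGF (GOOD_cpair hs (hw p))
    -- contract s0 into α
    have hαs0 : α ≠ s0 := fun h => hs0 (h ▸ hp1)
    have hαU : α ∈ V ∪ {s0, s1} := Finset.mem_union_left _ hp1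
    have hs0U : s0 ∈ V ∪ {s0, s1} := Finset.mem_union_right _ (by simp)
    have h2 : GOOD ((V ∪ {s0, s1}).erase s0)
        (ctr α s0 (prodC V {s0, s1} (cG F w) (cpair s0 s1 t))) :=
      ASANO hαs0 hαU hs0U h1
    have herase1 : (V ∪ {s0, s1}).erase s0 = V ∪ {s1} := by
      rw [Finset.erase_union_distrib, Finset.erase_eq_of_notMem hs0]
      congr 1
      ext k
      simp only [Finset.mem_erase, Finset.mem_insert, Finset.mem_singleton]
      constructor
      · rintro ⟨hk, (rfl | rfl)⟩
        · exact absurd rfl hk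
        · rfl
      · rintro rfl
        exact ⟨fun h => hs h.symm, Or.inr rfl⟩
    rw [herase1] at h2
    -- contract s1 into β
    have hβs1 : β ≠ s1 := fun h => hs1 (h ▸ hp2)
    have hβU : β ∈ V ∪ {s1} := Finset.mem_union_left _ hp2
    have hs1U : s1 ∈ V ∪ {s1} := Finset.mem_union_right _ (by simp)
    have h3 : GOOD ((V ∪ {s1}).erase s1)
        (ctr β s1 (ctr α s0 (prodC V {s0, s1} (cG F w) (cpair s0 s1 t)))) :=
      ASANO hβs1 hβU hs1U h2
    have herase2 : (V ∪ {s1}).erase s1 = V := by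
      rw [Finset.erase_union_distrib, Finset.erase_eq_of_notMem hs1,
        Finset.erase_singleton, Finset.union_empty]
    rw [herase2] at h3
    -- identify the coefficients
    refine GOOD_congr (fun a ha => ?_) h3
    have hs0a : s0 ∉ a := fun h => hs0 (ha h)
    have hs1a : s1 ∉ a := fun h => hs1 (ha h)
    have hαs1 : α ≠ s1 := fun h => hs1 (h ▸ hp1)
    have hβs0 : β ≠ s0 := fun h => hs0 (h ▸ hp2)
    have hinterV : ∀ b : Finset ι, b ∩ V = a ∩ V →
        (insert s0 b) ∩ V = a ∩ V ∧ (insert s1 b) ∩ V = a ∩ V := by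
      intro b hb
      constructor
      · rw [Finset.insert_inter_of_notMem hs0, hb]
      · rw [Finset.insert_inter_of_notMem hs1, hb]
    have haV : a ∩ V = a := Finset.inter_eq_left.mpr ha
    -- compute both sides by case analysis on membership of α, β in a
    have target : cG (insert p F) w a =
        cG F w a * (if (α ∈ a ↔ β ∈ a) then 1 else (t:ℂ)) := by
      rw [cG, Finset.prod_insert hpF, mul_comm]
      rfl
    rw [target]
    by_cases hαa : α ∈ a <;> by_cases hβa : β ∈ a <;>
      simp only [ctr, prodC, cpair, hαa, hβa, Finset.mem_insert, hαs1, false_or,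
        if_true, if_false, iff_true, iff_false, true_iff, false_iff] <;>
      · simp only [Finset.insert_inter_of_notMem hs0, Finset.insert_inter_of_notMem hs1, haV]
        norm_num [hs, hs.symm, hs0a, hs1a, hαa, hβa]

end

section finale
variable {n : ℕ}

private def emb (n : ℕ) : Fin n ↪ (Fin n ⊕ Fin 2) := ⟨Sum.inl, Sum.inl_injective⟩

private def wcoup (x : Fin n → Fin n → ℝ) : (Fin n ⊕ Fin 2) × (Fin n ⊕ Fin 2) → ℝ :=
  fun p => Sum.elim
    (fun a => Sum.elim (fun c => if a = c then 0 else x a c) (fun _ => 0) p.2)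
    (fun _ => 0) p.1

private def edges (n : ℕ) : Finset ((Fin n ⊕ Fin 2) × (Fin n ⊕ Fin 2)) :=
  ((Finset.univ : Finset (Fin n × Fin n)).filter (fun q => q.1 < q.2)).image
    (fun q => (Sum.inl q.1, Sum.inl q.2))

private lemma cG_map_value (x : Fin n → Fin n → ℝ) (hsymm : ∀ α β, x α β = x β α)
    (b : Finset (Fin n)) :
    cG (edges n) (wcoup x) (b.map (emb n)) = ((∏ α ∈ b, ∏ β ∈ bᶜ, x α β : ℝ) : ℂ) := by
  rw [cG, edges]
  rw [Finset.prod_image (by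
    intro q1 h1 q2 h2 heq
    simp only [Prod.ext_iff, Sum.inl.injEq] at heq
    exact Prod.ext heq.1 heq.2)]
  have hmem : ∀ (γ : Fin n), (Sum.inl γ : Fin n ⊕ Fin 2) ∈ b.map (emb n) ↔ γ ∈ b := by
    intro γ
    exact Finset.mem_map' (emb n)
  have step1 : ∀ q ∈ (Finset.univ : Finset (Fin n × Fin n)).filter (fun q => q.1 < q.2),
      (if ((Sum.inl q.1 : Fin n ⊕ Fin 2) ∈ b.map (emb n) ↔
          (Sum.inl q.2 : Fin n ⊕ Fin 2) ∈ b.map (emb n)) then (1:ℂ)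
        else (wcoup x (Sum.inl q.1, Sum.inl q.2) : ℂ)) =
      (if (q.1 ∈ b ↔ q.2 ∈ b) then (1:ℂ) else (x q.1 q.2 : ℂ)) := by
    intro q hq
    have hlt : q.1 < q.2 := (Finset.mem_filter.mp hq).2
    have hne : q.1 ≠ q.2 := ne_of_lt hlt
    have hw : wcoup x (Sum.inl q.1, Sum.inl q.2) = x q.1 q.2 := by
      simp [wcoup, hne]
    rw [hw]
    by_cases h : q.1 ∈ b ↔ q.2 ∈ b
    · rw [if_pos h, if_pos]
      rw [hmem, hmem]
      exact h
    · rw [if_neg h, if_neg]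
      rw [hmem, hmem]
      exact h
  rw [Finset.prod_congr rfl step1]
  have step2 : (∏ q ∈ (Finset.univ : Finset (Fin n × Fin n)).filter (fun q => q.1 < q.2),
      if (q.1 ∈ b ↔ q.2 ∈ b) then (1:ℂ) else (x q.1 q.2 : ℂ)) =
      ∏ q ∈ ((Finset.univ : Finset (Fin n × Fin n)).filter (fun q => q.1 < q.2)).filter
        (fun q => ¬(q.1 ∈ b ↔ q.2 ∈ b)), (x q.1 q.2 : ℂ) := by
    conv_rhs => rw [Finset.prod_filter]
    refine Finset.prod_congr rfl fun q _ => ?_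
    by_cases h : (q.1 ∈ b ↔ q.2 ∈ b) <;> simp [h]
  rw [step2, Finset.filter_filter]
  have hcast : ((∏ α ∈ b, ∏ β ∈ bᶜ, x α β : ℝ) : ℂ) = ∏ α ∈ b, ∏ β ∈ bᶜ, (x α β : ℂ) := by
    push_cast
    rfl
  rw [hcast, ← Finset.prod_product' (f := fun α β => (x α β : ℂ)) b bᶜ]
  -- now a bijection between ordered cut pairs and (b ×ˢ bᶜ)
  refine Finset.prod_nbij' (fun q => if q.1 ∈ b then q else (q.2, q.1))
    (fun r => if r.1 < r.2 then r else (r.2, r.1)) ?_ ?_ ?_ ?_ ?_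
  · intro q hq
    simp only [Finset.mem_filter, Finset.mem_univ, true_and] at hq
    obtain ⟨hlt, hcut⟩ := hq
    by_cases h1 : q.1 ∈ b
    · have h2 : q.2 ∉ b := fun h => hcut ⟨fun _ => h, fun _ => h1⟩
      simp only [if_pos h1]
      simp [Finset.mem_product, h1, h2]
    · have h2 : q.2 ∈ b := by
        by_contra h2
        exact hcut ⟨fun h => absurd h h1, fun h => absurd h h2⟩
      simp only [if_neg h1]
      simp [Finset.mem_product, h1, h2]
  · intro r hr
    simp only [Finset.mem_product, Finset.mem_compl] at hr
    obtain ⟨h1, h2⟩ := hr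
    have hne : r.1 ≠ r.2 := fun h => h2 (h ▸ h1)
    simp only [Finset.mem_filter, Finset.mem_univ, true_and]
    by_cases hlt : r.1 < r.2
    · simp only [if_pos hlt]
      exact ⟨hlt, fun hiff => h2 (hiff.mp h1)⟩
    · simp only [if_neg hlt]
      exact ⟨lt_of_le_of_ne (not_lt.mp hlt) hne.symm, fun hiff => h2 (hiff.mpr h1)⟩
  · intro q hq
    simp only [Finset.mem_filter, Finset.mem_univ, true_and] at hq
    obtain ⟨hlt, _⟩ := hq
    by_cases h1 : q.1 ∈ b
    · simp only [if_pos h1, if_pos hlt]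
    · have h3 : ¬ ((q.2, q.1).1 < (q.2, q.1).2) := not_lt.mpr (le_of_lt hlt)
      simp only [if_neg h1, if_neg h3]
  · intro r hr
    simp only [Finset.mem_product, Finset.mem_compl] at hr
    obtain ⟨h1, h2⟩ := hr
    by_cases hlt : r.1 < r.2
    · simp only [if_pos hlt, if_pos h1]
    · have h3 : ((r.2, r.1).1 : Fin n) ∉ b := h2
      simp only [if_neg hlt, if_neg h3]
  · intro q hq
    by_cases h1 : q.1 ∈ b
    · simp only [if_pos h1]
    · simp only [if_neg h1]
      exact congrArg _ (hsymm q.1 q.2)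

private lemma key_nonvanish (x : Fin n → Fin n → ℝ) (hsymm : ∀ α β, x α β = x β α)
    (hbound : ∀ α β, α ≠ β → |x α β| ≤ 1) (W : ℂ) (hW : 1 < Complex.abs W) :
    (∑ γ ∈ Finset.range (n + 1),
        ((∑ a ∈ Finset.powersetCard γ (Finset.univ : Finset (Fin n)),
            ∏ α ∈ a, ∏ β ∈ aᶜ, x α β : ℝ) : ℂ) * W ^ γ) ≠ 0 := by
  classical
  set main : Finset (Fin n ⊕ Fin 2) := Finset.univ.map (emb n) with hmain
  have hw : ∀ p, |wcoup x p| ≤ 1 := by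
    rintro ⟨a | a, c | c⟩ <;> simp [wcoup]
    rcases eq_or_ne a c with rfl | hne
    · simp
    · rw [if_neg hne]
      exact hbound a c hne
  have hedges : ∀ p ∈ edges n, p.1 ≠ p.2 ∧ p.1 ∈ main ∧ p.2 ∈ main := by
    intro p hp
    rw [edges, Finset.mem_image] at hp
    obtain ⟨q, hq, rfl⟩ := hp
    have hlt : q.1 < q.2 := (Finset.mem_filter.mp hq).2
    refine ⟨by simp [ne_of_lt hlt], ?_, ?_⟩
    · exact Finset.mem_map_of_mem (emb n) (Finset.mem_univ q.1)
    · exact Finset.mem_map_of_mem (emb n) (Finset.mem_univ q.2)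
  have hs0main : (Sum.inr 0 : Fin n ⊕ Fin 2) ∉ main := by
    rw [hmain]
    simp [emb]
  have hs1main : (Sum.inr 1 : Fin n ⊕ Fin 2) ∉ main := by
    rw [hmain]
    simp [emb]
  have hgood : GOOD main (cG (edges n) (wcoup x)) :=
    GOOD_graph main (Sum.inr 0) (Sum.inr 1) (by simp) hs0main hs1main
      (wcoup x) hw (edges n) hedges
  have hnv := GOOD_nonvanish hgood (fun _ => W) (fun j _ => hW)
  intro hcon
  apply hnv
  rw [Ev]
  have hstep : ∀ a ∈ main.powerset,
      cG (edges n) (wcoup x) a * ∏ i ∈ a, (fun _ => W) i =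
      cG (edges n) (wcoup x) a * W ^ a.card := by
    intro a _
    rw [Finset.prod_const]
  rw [Finset.sum_congr rfl hstep]
  have hreindex : ∑ a ∈ main.powerset, cG (edges n) (wcoup x) a * W ^ a.card =
      ∑ b ∈ (Finset.univ : Finset (Fin n)).powerset,
        ((∏ α ∈ b, ∏ β ∈ bᶜ, x α β : ℝ) : ℂ) * W ^ b.card := by
    refine Finset.sum_nbij' (fun a => Finset.univ.filter (fun γ => Sum.inl γ ∈ a))
      (fun b => b.map (emb n)) ?_ ?_ ?_ ?_ ?_
    · intro a _
      exact Finset.mem_powerset.mpr (Finset.subset_univ _)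
    · intro b _
      rw [Finset.mem_powerset, hmain]
      exact Finset.map_subset_map.mpr (Finset.subset_univ b)
    · intro a ha
      rw [Finset.mem_powerset, hmain] at ha
      ext u
      simp only [Finset.mem_map, Finset.mem_filter, Finset.mem_univ, true_and]
      constructor
      · rintro ⟨γ, hγ, rfl⟩
        exact hγ
      · intro hu
        obtain ⟨γ, _, rfl⟩ := Finset.mem_map.mp (ha hu)
        exact ⟨γ, hu, rfl⟩
    · intro b _
      ext γ
      simp only [Finset.mem_filter, Finset.mem_univ, true_and]
      exact Finset.mem_map' (emb n)
    · intro a ha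
      rw [Finset.mem_powerset] at ha
      have hrec : (Finset.univ.filter (fun γ => Sum.inl γ ∈ a)).map (emb n) = a := by
        ext u
        simp only [Finset.mem_map, Finset.mem_filter, Finset.mem_univ, true_and]
        constructor
        · rintro ⟨γ, hγ, rfl⟩
          exact hγ
        · intro hu
          obtain ⟨γ, _, rfl⟩ := Finset.mem_map.mp (ha hu)
          exact ⟨γ, hu, rfl⟩
      conv_lhs => rw [← hrec]
      rw [cG_map_value x hsymm, Finset.card_map]
  rw [hreindex]
  have hcardu : (Finset.univ : Finset (Fin n)).card = n := by simp
  rw [Finset.sum_powerset, hcardu]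
  rw [← hcon]
  refine Finset.sum_congr rfl fun γ _ => ?_
  have hc2 : ((∑ a ∈ Finset.powersetCard γ (Finset.univ : Finset (Fin n)),
      ∏ α ∈ a, ∏ β ∈ aᶜ, x α β : ℝ) : ℂ) =
      ∑ a ∈ Finset.powersetCard γ (Finset.univ : Finset (Fin n)),
        ((∏ α ∈ a, ∏ β ∈ aᶜ, x α β : ℝ) : ℂ) := by
    push_cast
    rfl
  rw [hc2, Finset.sum_mul]
  refine Finset.sum_congr rfl fun b hb => ?_
  rw [(Finset.mem_powersetCard.mp hb).2]

private lemma Q_palindrome (x : Fin n → Fin n → ℝ) (hsymm : ∀ α β, x α β = x β α)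
    {γ : ℕ} (hγ : γ ≤ n) :
    (∑ a ∈ Finset.powersetCard (n - γ) (Finset.univ : Finset (Fin n)),
        ∏ α ∈ a, ∏ β ∈ aᶜ, x α β) =
    ∑ a ∈ Finset.powersetCard γ (Finset.univ : Finset (Fin n)),
        ∏ α ∈ a, ∏ β ∈ aᶜ, x α β := by
  refine Finset.sum_nbij' (fun a => aᶜ) (fun a => aᶜ) ?_ ?_ ?_ ?_ ?_
  · intro a ha
    rw [Finset.mem_powersetCard] at ha ⊢
    refine ⟨Finset.subset_univ _, ?_⟩
    rw [Finset.card_compl, ha.2, Fintype.card_fin]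
    omega
  · intro a ha
    rw [Finset.mem_powersetCard] at ha ⊢
    refine ⟨Finset.subset_univ _, ?_⟩
    rw [Finset.card_compl, ha.2, Fintype.card_fin]
  · intro a _
    exact compl_compl a
  · intro a _
    exact compl_compl a
  · intro a _
    rw [compl_compl, Finset.prod_comm]
    exact Finset.prod_congr rfl fun β _ => Finset.prod_congr rfl fun α _ => hsymm α β

end finale

/-- **Lee–Yang circle theorem**: every complex root of the polynomial
`Q(z) = Σ_γ Q_γ z^γ`, where `Q_γ = Σ_{|a|=γ} Π_{α∈a} Π_{β∉a} x (α, β)` and where the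
symmetric real matrix `x` has entries of absolute value at most `1` off the diagonal,
lies on the unit circle. -/
theorem lee_yang_circle (n : ℕ) (hn : 1 ≤ n) (x : Fin n → Fin n → ℝ)
    (hsymm : ∀ α β, x α β = x β α)
    (hbound : ∀ α β, α ≠ β → |x α β| ≤ 1)
    (z : ℂ)
    (hz : ∑ γ ∈ Finset.range (n + 1),
        ((∑ a ∈ Finset.powersetCard γ (Finset.univ : Finset (Fin n)),
            ∏ α ∈ a, ∏ β ∈ aᶜ, x α β : ℝ) : ℂ) * z ^ γ = 0) :
    ‖z‖ = 1 := by
  classical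
  set Q : ℕ → ℂ := fun γ =>
    ((∑ a ∈ Finset.powersetCard γ (Finset.univ : Finset (Fin n)),
        ∏ α ∈ a, ∏ β ∈ aᶜ, x α β : ℝ) : ℂ) with hQ
  have hz0 : z ≠ 0 := by
    rintro rfl
    have h0 : ∑ γ ∈ Finset.range (n+1), Q γ * (0:ℂ)^γ = Q 0 := by
      rw [Finset.sum_eq_single_of_mem 0 (Finset.mem_range.mpr (Nat.succ_pos n))
        (fun b _ hb => by rw [zero_pow hb, mul_zero])]
      rw [pow_zero, mul_one]
    rw [h0] at hz
    have hQ0 : Q 0 = 1 := by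
      rw [hQ]
      norm_num [Finset.powersetCard_zero]
    rw [hQ0] at hz
    exact one_ne_zero hz
  have hle : Complex.abs z ≤ 1 := by
    by_contra h
    push_neg at h
    exact key_nonvanish x hsymm hbound z h hz
  have hzero2 : ∑ γ ∈ Finset.range (n+1), Q γ * z ^ (n - γ) = 0 := by
    have hrefl := Finset.sum_range_reflect (fun γ => Q γ * z ^ (n - γ)) (n+1)
    rw [← hrefl]
    simp only [Nat.add_sub_cancel]
    have hterm : ∀ j ∈ Finset.range (n+1), Q (n - j) * z ^ (n - (n - j)) = Q j * z ^ j := by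
      intro j hj
      have hjn : j ≤ n := Nat.lt_succ_iff.mp (Finset.mem_range.mp hj)
      rw [Nat.sub_sub_self hjn]
      congr 1
      rw [hQ]
      exact congrArg _ (Q_palindrome x hsymm hjn)
    rw [Finset.sum_congr rfl hterm]
    exact hz
  have hinv : (∑ γ ∈ Finset.range (n + 1), Q γ * (z⁻¹) ^ γ) = 0 := by
    have hterm : ∀ γ ∈ Finset.range (n+1),
        Q γ * (z⁻¹)^γ = (z^n)⁻¹ * (Q γ * z^(n - γ)) := by
      intro γ hγ
      have hγn : γ ≤ n := Nat.lt_succ_iff.mp (Finset.mem_range.mp hγ)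
      rw [inv_pow, pow_sub₀ z hz0 hγn]
      have hzn : (z:ℂ)^n ≠ 0 := pow_ne_zero n hz0
      have hzγ : (z:ℂ)^γ ≠ 0 := pow_ne_zero γ hz0
      field_simp
    rw [Finset.sum_congr rfl hterm, ← Finset.mul_sum, hzero2, mul_zero]
  have hge : 1 ≤ Complex.abs z := by
    by_contra h
    push_neg at h
    have hpos : 0 < Complex.abs z := AbsoluteValue.pos Complex.abs hz0
    have hzi : 1 < Complex.abs z⁻¹ := by
      rw [map_inv₀]
      exact (one_lt_inv₀ hpos).mpr h
    exact key_nonvanish x hsymm hbound z⁻¹ hzi hinv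
  exact le_antisymm hle hge
end

section
/- Let V be a nonempty finite set and let J, J' : V → V → ℝ be symmetric functions with zero diagonal such that J_{pq} ≥ |J'_{pq}| for all p, q (in particular J is ferromagnetic). Let ⟨·⟩_J and ⟨·⟩_{J'} denote the zero-field Gibbs expectations with weights exp((1/2)Σ_{p,q} J_{pq} σ_p σ_q) and exp((1/2)Σ_{p,q} J'_{pq} σ_p σ_q), respectively. Then for every finite subset A ⊆ V, ⟨σ_A⟩_J ≥ ⟨σ_A⟩_{J'}. -/
open Finset

/-- The spin value (±1) associated to a Boolean configuration. -/
noncomputable def spin {V : Type*} (s : V → Bool) : V → ℝ :=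
  fun p => if s p then 1 else -1

/-- Zero-field Boltzmann weight of a spin configuration for couplings `J`. -/
noncomputable def zfWeight {V : Type*} [Fintype V] (J : V → V → ℝ) (s : V → Bool) : ℝ :=
  Real.exp ((1 / 2) * ∑ p, ∑ q, J p q * spin s p * spin s q)

/-- Zero-field Gibbs expectation of an observable `f` for couplings `J`. -/
noncomputable def zfExpect {V : Type*} [Fintype V] [DecidableEq V]
    (J : V → V → ℝ) (f : (V → ℝ) → ℝ) : ℝ :=
  (∑ s : V → Bool, f (spin s) * zfWeight J s) / ∑ s : V → Bool, zfWeight J s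

section Aux
variable {V : Type*} [Fintype V] [DecidableEq V]

lemma abs_spin (s : V → Bool) (p : V) : |spin s p| = 1 := by
  unfold spin; rcases s p <;> norm_num

lemma spin_mul_spin (s u : V → Bool) (p : V) :
    spin (fun q => s q == u q) p = spin s p * spin u p := by
  unfold spin; rcases hs : s p <;> rcases hu : u p <;> simp [hs, hu]

lemma prod_spin_le_one (u : V → Bool) (A : Finset V) :
    ∏ p ∈ A, spin u p ≤ 1 := by
  refine le_trans (le_abs_self _) ?_
  rw [Finset.abs_prod]
  refine le_of_eq (Finset.prod_eq_one fun p _ => abs_spin u p)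

/-- Sum over all configurations of a monomial in spins is nonnegative. -/
lemma sum_prod_spin_nonneg {ι : Type*} [DecidableEq ι] (I : Finset ι) (g : ι → V) :
    0 ≤ ∑ s : V → Bool, ∏ i ∈ I, spin s (g i) := by
  have h : ∀ s : V → Bool, ∏ i ∈ I, spin s (g i)
      = ∏ p : V, (spin s p) ^ (I.filter (fun i => g i = p)).card := by
    intro s
    rw [← Finset.prod_fiberwise_of_maps_to (fun i _ => Finset.mem_univ (g i))
      (fun i => spin s (g i))]
    refine Finset.prod_congr rfl fun p _ => ?_
    rw [Finset.prod_congr rfl (fun i hi => ?_), Finset.prod_const]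
    exact congrArg (spin s) (Finset.mem_filter.mp hi).2
  simp_rw [h, spin]
  rw [← Fintype.prod_sum (fun p (b : Bool) =>
    ((if b then (1:ℝ) else -1)) ^ (I.filter (fun i => g i = p)).card)]
  refine Finset.prod_nonneg fun p _ => ?_
  rw [Fintype.sum_bool]
  rcases Nat.even_or_odd (I.filter (fun i => g i = p)).card with he | ho
  · simp [he.neg_one_pow]
  · simp [ho.neg_one_pow]

/-- Griffiths' first inequality (unnormalized, zero field). -/
lemma griffithsI (K : V → V → ℝ) (hK : ∀ p q, 0 ≤ K p q) (A : Finset V) :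
    0 ≤ ∑ s : V → Bool, (∏ p ∈ A, spin s p) * zfWeight K s := by
  have hw : ∀ s : V → Bool, zfWeight K s =
      ∏ e : V × V, (Real.sinh (K e.1 e.2 / 2) * (spin s e.1 * spin s e.2)
        + Real.cosh (K e.1 e.2 / 2)) := by
    intro s
    unfold zfWeight
    rw [← Finset.sum_product', Finset.univ_product_univ, Finset.mul_sum, Real.exp_sum]
    refine Finset.prod_congr rfl fun e _ => ?_
    have key : ∀ t : ℝ, t = 1 ∨ t = -1 →
        Real.exp (1 / 2 * (K e.1 e.2 * t)) =
          Real.sinh (K e.1 e.2 / 2) * t + Real.cosh (K e.1 e.2 / 2) := by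
      rintro t (rfl | rfl)
      · rw [mul_one, mul_one, Real.sinh_add_cosh]; ring_nf
      · have h2 : (1:ℝ)/2 * (K e.1 e.2 * -1) = -(K e.1 e.2/2) := by ring
        rw [h2, ← Real.cosh_sub_sinh]; ring
    have hsp : spin s e.1 * spin s e.2 = 1 ∨ spin s e.1 * spin s e.2 = -1 := by
      simp only [spin]
      rcases s e.1 <;> rcases s e.2 <;> norm_num
    have := key _ hsp
    rw [← this]
    ring_nf
  simp_rw [hw, Fintype.prod_add, Finset.mul_sum]
  rw [Finset.sum_comm]
  refine Finset.sum_nonneg fun T _ => ?_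
  have hconst : 0 ≤ (∏ e ∈ T, Real.sinh (K e.1 e.2 / 2)) * ∏ e ∈ Tᶜ, Real.cosh (K e.1 e.2 / 2) := by
    apply mul_nonneg
    · exact Finset.prod_nonneg fun e _ => Real.sinh_nonneg_iff.mpr (div_nonneg (hK _ _) (by norm_num))
    · exact Finset.prod_nonneg fun e _ => (Real.cosh_pos _).le
  have hre : ∀ s : V → Bool,
      (∏ p ∈ A, spin s p) *
        ((∏ e ∈ T, Real.sinh (K e.1 e.2 / 2) * (spin s e.1 * spin s e.2)) *
          ∏ e ∈ Tᶜ, Real.cosh (K e.1 e.2 / 2)) =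
      ((∏ e ∈ T, Real.sinh (K e.1 e.2 / 2)) * ∏ e ∈ Tᶜ, Real.cosh (K e.1 e.2 / 2)) *
        ∏ i ∈ A.disjSum (T.disjSum T),
          spin s (Sum.elim id (Sum.elim Prod.fst Prod.snd) i) := by
    intro s
    rw [Finset.prod_disjSum, Finset.prod_disjSum, Finset.prod_mul_distrib,
      Finset.prod_mul_distrib]
    simp only [Sum.elim_inl, Sum.elim_inr, id_eq]
    ring
  simp_rw [hre, ← Finset.mul_sum]
  exact mul_nonneg hconst (sum_prod_spin_nonneg _ _)

end Aux

/-- If `J_{pq} ≥ |J'_{pq}|` for all `p, q`, then `⟨σ_A⟩_J ≥ ⟨σ_A⟩_{J'}` for every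
finite set `A` of sites. -/
theorem correlation_comparison {V : Type*} [Fintype V] [DecidableEq V] [Nonempty V]
    (J J' : V → V → ℝ)
    (hsymm : ∀ p q, J p q = J q p) (hdiag : ∀ p, J p p = 0)
    (hsymm' : ∀ p q, J' p q = J' q p) (hdiag' : ∀ p, J' p p = 0)
    (hJ : ∀ p q, |J' p q| ≤ J p q)
    (A : Finset V) :
    zfExpect J' (fun σ => ∏ p ∈ A, σ p) ≤ zfExpect J (fun σ => ∏ p ∈ A, σ p) := by
  classical
  set σA : (V → Bool) → ℝ := fun s => ∏ p ∈ A, spin s p with hσA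
  -- the combined couplings
  set Kc : (V → Bool) → V → V → ℝ :=
    fun u p q => J p q + J' p q * spin u p * spin u q with hKc
  have hKnn : ∀ u p q, 0 ≤ Kc u p q := by
    intro u p q
    have h1 : |J' p q * spin u p * spin u q| = |J' p q| := by
      rw [abs_mul, abs_mul, abs_spin, abs_spin, mul_one, mul_one]
    have h2 := neg_abs_le (J' p q * spin u p * spin u q)
    rw [h1] at h2
    have := hJ p q
    simp only [hKc]
    linarith
  have hZ : 0 < ∑ s : V → Bool, zfWeight J s :=
    Finset.sum_pos (fun s _ => Real.exp_pos _) Finset.univ_nonempty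
  have hZ' : 0 < ∑ s : V → Bool, zfWeight J' s :=
    Finset.sum_pos (fun s _ => Real.exp_pos _) Finset.univ_nonempty
  unfold zfExpect
  rw [div_le_div_iff₀ hZ' hZ, ← sub_nonneg]
  -- expand the two products of sums
  rw [Finset.sum_mul_sum, Finset.sum_mul_sum]
  rw [show (∑ t : V → Bool, ∑ s : V → Bool, (σA t * zfWeight J' t) * zfWeight J s)
      = ∑ s : V → Bool, ∑ t : V → Bool, (σA t * zfWeight J' t) * zfWeight J s from Finset.sum_comm]
  rw [← Finset.sum_sub_distrib]
  simp_rw [← Finset.sum_sub_distrib]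
  -- reindex the inner sum via t ↦ (s == t)
  have key : ∀ s : V → Bool,
      (∑ t : V → Bool, ((σA s * zfWeight J s) * zfWeight J' t
        - (σA t * zfWeight J' t) * zfWeight J s))
      = ∑ u : V → Bool, (1 - σA u) * (σA s * zfWeight (Kc u) s) := by
    intro s
    refine (Fintype.sum_bijective (fun u : V → Bool => fun p => s p == u p)
      ?_ _ _ ?_).symm
    · apply Function.Involutive.bijective
      intro u
      funext p
      rcases hs : s p <;> rcases hu : u p <;> simp [hs, hu]
    · intro u
      have hbs : σA (fun p => s p == u p) = σA s * σA u := by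
        simp only [hσA]
        rw [← Finset.prod_mul_distrib]
        exact Finset.prod_congr rfl fun p _ => spin_mul_spin s u p
      have hww : zfWeight J s * zfWeight J' (fun p => s p == u p)
          = zfWeight (Kc u) s := by
        unfold zfWeight
        rw [← Real.exp_add, ← mul_add, ← Finset.sum_add_distrib]
        congr 2
        refine Finset.sum_congr rfl fun p _ => ?_
        rw [← Finset.sum_add_distrib]
        refine Finset.sum_congr rfl fun q _ => ?_
        rw [spin_mul_spin, spin_mul_spin]
        simp only [hKc]
        ring
      rw [hbs, ← hww]
      ring
  rw [Finset.sum_congr rfl (fun s _ => key s), Finset.sum_comm]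
  refine Finset.sum_nonneg fun u _ => ?_
  rw [← Finset.mul_sum]
  refine mul_nonneg ?_ ?_
  · have := prod_spin_le_one u A
    simp only [hσA]
    linarith
  · exact griffithsI (Kc u) (hKnn u) A
end

section
/- (High-temperature expansion.) Let G be a finite simple graph with vertex set V and edge set E, and let J : E → ℝ. Then Σ_{σ : V → {−1,+1}} Π_{e = {u,v} ∈ E} exp(J_e σ_u σ_v) = 2^{|V|} · (Π_{e∈E} cosh J_e) · Σ_{C ⊆ E, every vertex of V is incident to an even number of edges of C} Π_{e∈C} tanh J_e. -/
open Finset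

/-- The product `σ_u σ_v` over the two endpoints of an unordered pair. -/
noncomputable def edgeSpin {V : Type*} (s : V → Bool) : Sym2 V → ℝ :=
  Sym2.lift ⟨fun u v => spin s u * spin s v, fun u v => mul_comm _ _⟩

lemma edgeSpin_pm {V : Type*} (s : V → Bool) (e : Sym2 V) :
    edgeSpin s e = 1 ∨ edgeSpin s e = -1 := by
  induction e using Sym2.ind with
  | _ u v =>
    show spin s u * spin s v = 1 ∨ spin s u * spin s v = -1
    unfold spin
    rcases s u <;> rcases s v <;> simp

lemma exp_eq_cosh_mul {J x : ℝ} (hx : x = 1 ∨ x = -1) :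
    Real.exp (J * x) = Real.cosh J * (1 + Real.tanh J * x) := by
  have h0 : Real.cosh J ≠ 0 := (Real.cosh_pos J).ne'
  rcases hx with h | h <;> subst h <;>
      rw [Real.tanh_eq_sinh_div_cosh] <;> field_simp
  rw [← Real.cosh_add_sinh]
  rw [← Real.cosh_sub_sinh]; ring

lemma prod_edgeSpin {V : Type*} [Fintype V] [DecidableEq V] (s : V → Bool)
    (C : Finset (Sym2 V)) (hC : ∀ e ∈ C, ¬ e.IsDiag) :
    ∏ e ∈ C, edgeSpin s e
      = ∏ v : V, spin s v ^ (C.filter (fun e => v ∈ e)).card := by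
  induction C using Finset.induction_on with
  | empty => simp
  | @insert e C he ih =>
    have hcard : ∀ w : V, ((insert e C).filter (fun e' => w ∈ e')).card
        = (C.filter (fun e' => w ∈ e')).card + (if w ∈ e then 1 else 0) := by
      intro w
      rw [Finset.filter_insert]
      split
      · rw [Finset.card_insert_of_notMem (fun h => he (Finset.mem_filter.mp h).1)]

      · simp [*]
    simp only [hcard, pow_add, Finset.prod_mul_distrib]
    rw [Finset.prod_insert he, ih (fun e' h' => hC e' (Finset.mem_insert_of_mem h'))]
    have hfin : ∏ v : V, spin s v ^ (if v ∈ e then 1 else 0) = edgeSpin s e := by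
      induction e using Sym2.ind with
      | _ u v =>
        have huv : u ≠ v := by
          have := hC _ (Finset.mem_insert_self _ _)
          simpa [Sym2.isDiag_iff_proj_eq] using this
        have hset : Finset.univ.filter (fun w => w ∈ (s(u, v) : Sym2 V)) = {u, v} := by
          ext w; simp [Sym2.mem_iff]
        calc ∏ w : V, spin s w ^ (if w ∈ (s(u,v) : Sym2 V) then 1 else 0)
            = ∏ w : V, (if w ∈ (s(u,v) : Sym2 V) then spin s w else 1) := by
              apply Finset.prod_congr rfl; intro w _; split <;> simp
          _ = ∏ w ∈ Finset.univ.filter (fun w => w ∈ (s(u,v) : Sym2 V)), spin s w :=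
              (Finset.prod_filter _ _).symm
          _ = ∏ w ∈ ({u, v} : Finset V), spin s w := by rw [hset]
          _ = spin s u * spin s v := Finset.prod_pair huv
          _ = edgeSpin s s(u,v) := rfl
    rw [hfin]; ring

lemma sum_spin_pow {V : Type*} [Fintype V] [DecidableEq V] (d : V → ℕ) :
    ∑ s : V → Bool, ∏ v : V, spin s v ^ d v
      = if ∀ v : V, Even (d v) then (2 : ℝ) ^ Fintype.card V else 0 := by
  have key : ∑ s : V → Bool, ∏ v : V, spin s v ^ d v
      = ∏ v : V, ∑ b : Bool, (if b then (1:ℝ) else -1) ^ d v := by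
    rw [Fintype.prod_sum]
    rfl
  rw [key]
  have hb : ∀ v : V, ∑ b : Bool, (if b then (1:ℝ) else -1) ^ d v
      = if Even (d v) then 2 else 0 := by
    intro v
    rw [Fintype.sum_bool]
    by_cases h : Even (d v)
    · simp [h, h.neg_one_pow]; norm_num
    · rw [if_neg h]
      simp [(Nat.not_even_iff_odd.mp h).neg_one_pow]
  simp only [hb]
  by_cases hall : ∀ v : V, Even (d v)
  · rw [if_pos hall]
    rw [Finset.prod_congr rfl (fun v _ => if_pos (hall v)), Finset.prod_const]
    rfl
  · rw [if_neg hall]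
    push_neg at hall
    obtain ⟨v, hv⟩ := hall
    exact Finset.prod_eq_zero (Finset.mem_univ v) (if_neg hv)

/-- **High-temperature expansion** of the Ising partition function:
`Σ_σ Π_{e∈E} exp(J_e σ_u σ_v)
  = 2^{|V|} · Π_{e∈E} cosh J_e · Σ_{even C ⊆ E} Π_{e∈C} tanh J_e`. -/
theorem high_temperature_expansion {V : Type*} [Fintype V] [DecidableEq V]
    (G : SimpleGraph V) [DecidableRel G.Adj] (J : Sym2 V → ℝ) :
    ∑ s : V → Bool, ∏ e ∈ G.edgeFinset, Real.exp (J e * edgeSpin s e)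
      = 2 ^ Fintype.card V * (∏ e ∈ G.edgeFinset, Real.cosh (J e)) *
        ∑ C ∈ G.edgeFinset.powerset.filter
            (fun C => ∀ v : V, Even ((C.filter (fun e => v ∈ e)).card)),
          ∏ e ∈ C, Real.tanh (J e) := by
  classical
  have hdiag : ∀ e ∈ G.edgeFinset, ¬ e.IsDiag := fun e he =>
    G.not_isDiag_of_mem_edgeSet (SimpleGraph.mem_edgeFinset.mp he)
  calc
    ∑ s : V → Bool, ∏ e ∈ G.edgeFinset, Real.exp (J e * edgeSpin s e)
        = ∑ s : V → Bool, ∏ e ∈ G.edgeFinset,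
            Real.cosh (J e) * (1 + Real.tanh (J e) * edgeSpin s e) :=
          Finset.sum_congr rfl fun s _ => Finset.prod_congr rfl fun e _ =>
            exp_eq_cosh_mul (edgeSpin_pm s e)
    _ = (∏ e ∈ G.edgeFinset, Real.cosh (J e)) *
          ∑ s : V → Bool, ∏ e ∈ G.edgeFinset, (1 + Real.tanh (J e) * edgeSpin s e) := by
          rw [Finset.mul_sum]
          exact Finset.sum_congr rfl fun s _ => Finset.prod_mul_distrib
    _ = (∏ e ∈ G.edgeFinset, Real.cosh (J e)) *
          ∑ C ∈ G.edgeFinset.powerset,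
            (∏ e ∈ C, Real.tanh (J e)) * ∑ s : V → Bool, ∏ e ∈ C, edgeSpin s e := by
          congr 1
          have step : ∀ s : V → Bool,
              ∏ e ∈ G.edgeFinset, (1 + Real.tanh (J e) * edgeSpin s e)
                = ∑ C ∈ G.edgeFinset.powerset, ∏ e ∈ C, (Real.tanh (J e) * edgeSpin s e) := by
            intro s
            rw [Finset.prod_congr rfl fun e _ => add_comm 1 (Real.tanh (J e) * edgeSpin s e),
              Finset.prod_add]
            simp
          simp only [step]
          rw [Finset.sum_comm]
          refine Finset.sum_congr rfl fun C _ => ?_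
          rw [Finset.mul_sum]
          exact Finset.sum_congr rfl fun s _ => Finset.prod_mul_distrib
    _ = (∏ e ∈ G.edgeFinset, Real.cosh (J e)) *
          ∑ C ∈ G.edgeFinset.powerset,
            (∏ e ∈ C, Real.tanh (J e)) *
              (if ∀ v : V, Even ((C.filter (fun e => v ∈ e)).card)
                then (2:ℝ) ^ Fintype.card V else 0) := by
          congr 1
          refine Finset.sum_congr rfl fun C hC => ?_
          congr 1
          have hCd : ∀ e ∈ C, ¬ e.IsDiag := fun e he =>
            hdiag e (Finset.mem_powerset.mp hC he)
          rw [Finset.sum_congr rfl fun s _ => prod_edgeSpin s C hCd, sum_spin_pow]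
    _ = 2 ^ Fintype.card V * (∏ e ∈ G.edgeFinset, Real.cosh (J e)) *
          ∑ C ∈ G.edgeFinset.powerset.filter
              (fun C => ∀ v : V, Even ((C.filter (fun e => v ∈ e)).card)),
            ∏ e ∈ C, Real.tanh (J e) := by
          rw [Finset.sum_filter, Finset.mul_sum, mul_assoc, Finset.mul_sum, Finset.mul_sum]
          refine Finset.sum_congr rfl fun C _ => ?_
          split <;> ring
end

section
/- Let N ≥ 1, let Q be an N×N real symmetric matrix with all entries strictly positive, let F and G be N×N diagonal matrices all of whose diagonal entries lie in {0, 1}, and let i be an even natural number. Then the limits L_F = lim_{s→∞} tr(F Q^s)/tr(Q^s), L_G = lim_{s→∞} tr(G Q^s)/tr(Q^s), L_{FG} = lim_{s→∞} tr(F Q^i G Q^s)/tr(Q^{s+i}), L_{FF} = lim_{s→∞} tr(F Q^i F Q^s)/tr(Q^{s+i}) and L_{GG} = lim_{s→∞} tr(G Q^i G Q^s)/tr(Q^{s+i}) all exist, L_{FF} − L_F² ≥ 0 and L_{GG} − L_G² ≥ 0, and L_{FG} − L_F·L_G ≤ sqrt( (L_{FF} − L_F²)·(L_{GG} − L_G²)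 ). -/
open Filter Matrix


lemma aux_bilin {N : ℕ} (U : Matrix (Fin N) (Fin N) ℝ) (c : Fin N → ℝ)
    (R : Matrix (Fin N) (Fin N) ℝ)
    (hent : ∀ a b, R a b = ∑ k, U a k * c k * U b k) (x y : Fin N → ℝ) :
    ∑ a, ∑ b, x a * R a b * y b
      = ∑ k, c k * ((∑ a, U a k * x a) * (∑ b, U b k * y b)) := by
  have h1 : ∀ a b, x a * R a b * y b
      = ∑ k, c k * ((U a k * x a) * (U b k * y b)) := by
    intro a b
    rw [hent, Finset.mul_sum, Finset.sum_mul]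
    exact Finset.sum_congr rfl fun k _ => by ring
  calc ∑ a, ∑ b, x a * R a b * y b
      = ∑ a, ∑ k, ∑ b, c k * ((U a k * x a) * (U b k * y b)) := by
        refine Finset.sum_congr rfl fun a _ => ?_
        rw [Finset.sum_comm]
        exact Finset.sum_congr rfl fun b _ => h1 a b
    _ = ∑ k, ∑ a, ∑ b, c k * ((U a k * x a) * (U b k * y b)) := Finset.sum_comm
    _ = ∑ k, c k * ((∑ a, U a k * x a) * (∑ b, U b k * y b)) := by
        refine Finset.sum_congr rfl fun k _ => ?_
        rw [Finset.sum_mul_sum, Finset.mul_sum]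
        refine Finset.sum_congr rfl fun a _ => by rw [Finset.mul_sum]

lemma aux_apply {N : ℕ} (U : Matrix (Fin N) (Fin N) ℝ) (c : Fin N → ℝ)
    (R : Matrix (Fin N) (Fin N) ℝ)
    (hent : ∀ a b, R a b = ∑ k, U a k * c k * U b k) (x : Fin N → ℝ) (a : Fin N) :
    ∑ b, R a b * x b = ∑ k, U a k * (c k * ∑ b, U b k * x b) := by
  calc ∑ b, R a b * x b = ∑ b, ∑ k, (U a k * c k) * (U b k * x b) := by
        refine Finset.sum_congr rfl fun b _ => ?_
        rw [hent, Finset.sum_mul]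
        exact Finset.sum_congr rfl fun k _ => by ring
    _ = ∑ k, ∑ b, (U a k * c k) * (U b k * x b) := Finset.sum_comm
    _ = _ := by
        refine Finset.sum_congr rfl fun k _ => ?_
        rw [← Finset.mul_sum, mul_assoc]


lemma aux_ratio {N : ℕ} (μ c d : Fin N → ℝ) (k0 : Fin N)
    (hpos : 0 < μ k0) (hlt : ∀ k, k ≠ k0 → |μ k| < μ k0) (hd : d k0 ≠ 0) :
    Tendsto (fun s : ℕ => (∑ k, c k * μ k ^ s) / (∑ k, d k * μ k ^ s)) atTop
      (nhds (c k0 / d k0)) := by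
  have hnum : ∀ e : Fin N → ℝ,
      Tendsto (fun s : ℕ => ∑ k, e k * (μ k / μ k0) ^ s) atTop (nhds (e k0)) := by
    intro e
    have h : ∀ k ∈ (Finset.univ : Finset (Fin N)),
        Tendsto (fun s : ℕ => e k * (μ k / μ k0) ^ s) atTop
          (nhds (if k = k0 then e k else 0)) := by
      intro k _
      by_cases hk : k = k0
      · subst hk
        simpa [div_self hpos.ne'] using
          (tendsto_const_nhds : Tendsto (fun _ : ℕ => e k) atTop (nhds (e k)))
      · have habs : |μ k / μ k0| < 1 := by
          rw [abs_div, abs_of_pos hpos, div_lt_one hpos]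
          exact hlt k hk
        have := (tendsto_pow_atTop_nhds_zero_iff.mpr habs).const_mul (e k)
        simpa [hk] using this
    simpa [Finset.sum_ite_eq'] using tendsto_finset_sum Finset.univ h
  have key : ∀ s : ℕ, (∑ k, c k * μ k ^ s) / (∑ k, d k * μ k ^ s)
      = (∑ k, c k * (μ k / μ k0) ^ s) / (∑ k, d k * (μ k / μ k0) ^ s) := by
    intro s
    have hL : (μ k0) ^ s ≠ 0 := pow_ne_zero _ hpos.ne'
    have he : ∀ e : Fin N → ℝ,
        ∑ k, e k * (μ k / μ k0) ^ s = (∑ k, e k * μ k ^ s) / μ k0 ^ s := by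
      intro e
      rw [Finset.sum_div]
      exact Finset.sum_congr rfl fun k _ => by rw [div_pow, mul_div_assoc]
    rw [he, he, div_div_div_cancel_right₀ hL]
  have := (hnum c).div (hnum d) hd
  refine Tendsto.congr (fun s => (key s).symm) this

lemma aux_perron {N : ℕ} (hN : 1 ≤ N) (Q U : Matrix (Fin N) (Fin N) ℝ) (μ : Fin N → ℝ)
    (hQpos : ∀ a b, 0 < Q a b)
    (hent : ∀ a b, Q a b = ∑ k, U a k * μ k * U b k)
    (hcol : ∀ k l, ∑ a, U a k * U a l = (if k = l then (1:ℝ) else 0))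
    (hrow : ∀ a b, ∑ k, U a k * U b k = (if a = b then (1:ℝ) else 0)) :
    ∃ k0, 0 < μ k0 ∧ ∀ k, k ≠ k0 → |μ k| < μ k0 := by
  have hne : (Finset.univ : Finset (Fin N)).Nonempty := ⟨⟨0, hN⟩, Finset.mem_univ _⟩
  obtain ⟨k0, -, hk0⟩ := Finset.exists_max_image Finset.univ μ hne
  simp only [Finset.mem_univ, forall_true_left] at hk0
  have hk0' : ∀ k, μ k ≤ μ k0 := hk0
  -- norms via spectral coordinates
  have hent1 : ∀ a b, (1 : Matrix (Fin N) (Fin N) ℝ) a b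
      = ∑ k, U a k * (fun _ => (1:ℝ)) k * U b k := by
    intro a b
    simp only [mul_one]
    rw [hrow, Matrix.one_apply]
  have hnsq : ∀ x : Fin N → ℝ, ∑ a, x a * x a
      = ∑ k, (∑ a, U a k * x a) * (∑ a, U a k * x a) := by
    intro x
    have h := aux_bilin U (fun _ => (1:ℝ)) 1 hent1 x x
    simpa [Matrix.one_apply, mul_ite, ite_mul, Finset.sum_ite_eq] using h
  -- Rayleigh bound
  have hray : ∀ x : Fin N → ℝ,
      ∑ a, ∑ b, x a * Q a b * x b ≤ μ k0 * ∑ a, x a * x a := by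
    intro x
    rw [aux_bilin U μ Q hent x x, hnsq, Finset.mul_sum]
    exact Finset.sum_le_sum fun k _ =>
      mul_le_mul_of_nonneg_right (hk0' k) (mul_self_nonneg _)
  -- equality case implies eigenvector
  have heig : ∀ x : Fin N → ℝ,
      (∑ a, ∑ b, x a * Q a b * x b) = μ k0 * (∑ a, x a * x a) →
      ∀ a, ∑ b, Q a b * x b = μ k0 * x a := by
    intro x hx a
    have hx' : ∑ k, (μ k0 - μ k) * ((∑ a, U a k * x a) * (∑ a, U a k * x a)) = 0 := by
      have e1 : ∑ k, (μ k0 - μ k) * ((∑ a, U a k * x a) * (∑ a, U a k * x a))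
          = μ k0 * (∑ a, x a * x a) - ∑ a, ∑ b, x a * Q a b * x b := by
        rw [aux_bilin U μ Q hent x x, hnsq, Finset.mul_sum, ← Finset.sum_sub_distrib]
        exact Finset.sum_congr rfl fun k _ => by ring
      rw [e1, hx, sub_self]
    have hterm := (Finset.sum_eq_zero_iff_of_nonneg (fun k _ =>
      mul_nonneg (sub_nonneg.mpr (hk0' k)) (mul_self_nonneg _))).mp hx'
    have hw : ∀ k, μ k * (∑ a, U a k * x a) = μ k0 * (∑ a, U a k * x a) := by
      intro k
      rcases mul_eq_zero.mp (hterm k (Finset.mem_univ k)) with h | h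
      · rw [sub_eq_zero.mp h]
      · rw [mul_self_eq_zero.mp h, mul_zero, mul_zero]
    have hxa : ∑ k, U a k * (∑ b, U b k * x b) = x a := by
      have h := aux_apply U (fun _ => (1:ℝ)) 1 hent1 x a
      simp only [one_mul] at h
      rw [← h]
      simp [Matrix.one_apply, ite_mul, Finset.sum_ite_eq]
    calc ∑ b, Q a b * x b = ∑ k, U a k * (μ k * ∑ b, U b k * x b) :=
          aux_apply U μ Q hent x a
      _ = ∑ k, U a k * (μ k0 * ∑ b, U b k * x b) := by
          exact Finset.sum_congr rfl fun k _ => by rw [hw]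
      _ = μ k0 * ∑ k, U a k * (∑ b, U b k * x b) := by
          rw [Finset.mul_sum]; exact Finset.sum_congr rfl fun k _ => by ring
      _ = μ k0 * x a := by rw [hxa]
  -- columns are eigenvectors / Rayleigh value
  have hvQ : ∀ k, ∑ a, ∑ b, U a k * Q a b * U b k = μ k := by
    intro k
    rw [aux_bilin U μ Q hent]
    have hc : ∀ l, (∑ a, U a l * U a k) = if l = k then (1:ℝ) else 0 := fun l => hcol l k
    simp [hc, mul_ite, ite_mul, Finset.sum_ite_eq']
  -- positivity of top eigenvalue
  have hlam : 0 < μ k0 := by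
    have htr : ∑ a, Q a a = ∑ k, μ k := by
      calc ∑ a, Q a a = ∑ a, ∑ k, μ k * (U a k * U a k) := by
            refine Finset.sum_congr rfl fun a _ => ?_
            rw [hent]
            exact Finset.sum_congr rfl fun k _ => by ring
        _ = ∑ k, μ k * ∑ a, U a k * U a k := by
            rw [Finset.sum_comm]
            exact Finset.sum_congr rfl fun k _ => by rw [Finset.mul_sum]
        _ = ∑ k, μ k := by simp [hcol]
    have hpostr : 0 < ∑ k, μ k := htr ▸ Finset.sum_pos (fun a _ => hQpos a a) hne
    by_contra hcon
    push_neg at hcon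
    have : ∑ k, μ k ≤ 0 :=
      Finset.sum_nonpos fun k _ => le_trans (hk0' k) hcon
    linarith
  -- weak bound |μ k| ≤ μ k0 and the equality analysis
  have hSle : ∀ k, ∑ a, ∑ b, |U a k| * Q a b * |U b k| ≤ μ k0 := by
    intro k
    have hv1 : ∑ a, U a k * U a k = 1 := by simpa using hcol k k
    have hav1 : ∑ a, |U a k| * |U a k| = 1 := by
      simpa only [abs_mul_abs_self] using hv1
    have h := hray (fun a => |U a k|)
    rwa [hav1, mul_one] at h
  have habsle : ∀ k, |μ k| ≤ ∑ a, ∑ b, |U a k| * Q a b * |U b k| := by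
    intro k
    have e1 : |μ k| ≤ ∑ a, |∑ b, U a k * Q a b * U b k| := by
      rw [← hvQ k]
      exact Finset.abs_sum_le_sum_abs _ _
    refine e1.trans (Finset.sum_le_sum fun a _ => ?_)
    refine (Finset.abs_sum_le_sum_abs _ _).trans_eq ?_
    exact Finset.sum_congr rfl fun b _ => by
      rw [abs_mul, abs_mul, abs_of_pos (hQpos a b)]
  have hweak : ∀ k, |μ k| ≤ μ k0 := fun k => (habsle k).trans (hSle k)
  have hcore : ∀ k, |μ k| = μ k0 →
      (∀ a b, U a k * U b k = |U a k| * |U b k|) ∧ (∀ a, 0 < |U a k|) := by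
    intro k habs
    have hv1 : ∑ a, U a k * U a k = 1 := by simpa using hcol k k
    have hav1 : ∑ a, |U a k| * |U a k| = 1 := by
      simpa only [abs_mul_abs_self] using hv1
    have hSeq : ∑ a, ∑ b, |U a k| * Q a b * |U b k| = μ k0 :=
      le_antisymm (hSle k) (habs ▸ habsle k)
    have heigav : ∀ a, ∑ b, Q a b * |U b k| = μ k0 * |U a k| :=
      heig _ (by rw [hSeq, hav1, mul_one])
    have havpos : ∀ a, 0 < |U a k| := by
      obtain ⟨b0, hb0⟩ : ∃ b0, |U b0 k| ≠ 0 := by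
        by_contra hall
        push_neg at hall
        simp [hall] at hav1
      have hb0' : 0 < |U b0 k| := lt_of_le_of_ne (abs_nonneg _) (Ne.symm hb0)
      intro a
      by_contra hca
      have ha0 : |U a k| = 0 := le_antisymm (not_lt.mp hca) (abs_nonneg _)
      have h1 : 0 < ∑ b, Q a b * |U b k| :=
        lt_of_lt_of_le (mul_pos (hQpos a b0) hb0')
          (Finset.single_le_sum (f := fun b => Q a b * |U b k|)
            (fun b _ => mul_nonneg (hQpos a b).le (abs_nonneg _)) (Finset.mem_univ b0))
      rw [heigav a, ha0, mul_zero] at h1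
      exact lt_irrefl 0 h1
    rcases (abs_eq hlam.le).mp habs with hmu | hmu
    · -- μ k = μ k0 : constant sign
      refine ⟨?_, havpos⟩
      have hle : ∀ p ∈ Finset.univ ×ˢ (Finset.univ : Finset (Fin N)),
          U p.1 k * Q p.1 p.2 * U p.2 k ≤ |U p.1 k| * Q p.1 p.2 * |U p.2 k| := by
        intro p _
        calc U p.1 k * Q p.1 p.2 * U p.2 k ≤ |U p.1 k * Q p.1 p.2 * U p.2 k| := le_abs_self _
          _ = |U p.1 k| * Q p.1 p.2 * |U p.2 k| := by
              rw [abs_mul, abs_mul, abs_of_pos (hQpos _ _)]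
      have hsum_eq : ∑ p ∈ Finset.univ ×ˢ (Finset.univ : Finset (Fin N)),
          U p.1 k * Q p.1 p.2 * U p.2 k
          = ∑ p ∈ Finset.univ ×ˢ (Finset.univ : Finset (Fin N)),
            |U p.1 k| * Q p.1 p.2 * |U p.2 k| := by
        rw [Finset.sum_product, Finset.sum_product, hvQ k, hSeq, hmu]
      have hterm := (Finset.sum_eq_sum_iff_of_le hle).mp hsum_eq
      intro a b
      have h := hterm (a, b) (Finset.mem_product.mpr ⟨Finset.mem_univ a, Finset.mem_univ b⟩)
      have h' : Q a b * (U a k * U b k) = Q a b * (|U a k| * |U b k|) := by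
        dsimp at h
        linarith [h]
      exact mul_left_cancel₀ (hQpos a b).ne' h'
    · -- μ k = -μ k0 : impossible
      exfalso
      have hle : ∀ p ∈ Finset.univ ×ˢ (Finset.univ : Finset (Fin N)),
          -(U p.1 k * Q p.1 p.2 * U p.2 k) ≤ |U p.1 k| * Q p.1 p.2 * |U p.2 k| := by
        intro p _
        calc -(U p.1 k * Q p.1 p.2 * U p.2 k) ≤ |U p.1 k * Q p.1 p.2 * U p.2 k| :=
              neg_le_abs _
          _ = |U p.1 k| * Q p.1 p.2 * |U p.2 k| := by
              rw [abs_mul, abs_mul, abs_of_pos (hQpos _ _)]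
      have hsum_eq : ∑ p ∈ Finset.univ ×ˢ (Finset.univ : Finset (Fin N)),
          -(U p.1 k * Q p.1 p.2 * U p.2 k)
          = ∑ p ∈ Finset.univ ×ˢ (Finset.univ : Finset (Fin N)),
            |U p.1 k| * Q p.1 p.2 * |U p.2 k| := by
        rw [Finset.sum_product, Finset.sum_product, hSeq]
        have : ∑ a, ∑ b, -(U a k * Q a b * U b k) = -(μ k) := by
          rw [← hvQ k]
          simp [Finset.sum_neg_distrib]
        rw [this, hmu, neg_neg]
      have hterm := (Finset.sum_eq_sum_iff_of_le hle).mp hsum_eq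
      set a0 : Fin N := ⟨0, hN⟩
      have h := hterm (a0, a0) (Finset.mem_product.mpr ⟨Finset.mem_univ a0, Finset.mem_univ a0⟩)
      dsimp at h
      have h1 := havpos a0
      have h2 := hQpos a0 a0
      have habs2 : |U a0 k| * Q a0 a0 * |U a0 k| = Q a0 a0 * (U a0 k * U a0 k) := by
        rw [mul_comm (|U a0 k|) (Q a0 a0), mul_assoc, abs_mul_abs_self]
      have hupos : 0 < U a0 k * U a0 k := by
        have := abs_mul_abs_self (U a0 k)
        nlinarith
      nlinarith [mul_pos h2 hupos]
  refine ⟨k0, hlam, ?_⟩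
  intro k hk
  rcases eq_or_lt_of_le (hweak k) with heq | hlt
  · exfalso
    obtain ⟨hsign, hpos⟩ := hcore k heq
    obtain ⟨hsign0, hpos0⟩ := hcore k0 (abs_of_pos hlam)
    have horto : ∑ a, U a k * U a k0 = 0 := by simpa [hk] using hcol k k0
    set a0 : Fin N := ⟨0, hN⟩
    have h1 : 0 < ∑ a, (U a0 k * U a k) * (U a0 k0 * U a k0) :=
      Finset.sum_pos (fun a _ => by
        rw [hsign a0 a, hsign0 a0 a]
        exact mul_pos (mul_pos (hpos a0) (hpos a)) (mul_pos (hpos0 a0) (hpos0 a))) hne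
    have h2 : ∑ a, (U a0 k * U a k) * (U a0 k0 * U a k0)
        = (U a0 k * U a0 k0) * ∑ a, U a k * U a k0 := by
      rw [Finset.mul_sum]
      exact Finset.sum_congr rfl fun a _ => by ring
    rw [h2, horto, mul_zero] at h1
    exact lt_irrefl 0 h1
  · exact hlt

/-- The transfer-matrix limits `L_F, L_G, L_{FG}, L_{FF}, L_{GG}` exist for a symmetric
matrix `Q` with strictly positive entries and 0/1 diagonal matrices `F, G`, and for even
`i` they satisfy `L_{FF} ≥ L_F²`, `L_{GG} ≥ L_G²` and the Cauchy–Schwarz bound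
`L_{FG} − L_F·L_G ≤ √((L_{FF} − L_F²)(L_{GG} − L_G²))`. -/
theorem transfer_matrix_cauchy_schwarz (N : ℕ) (hN : 1 ≤ N)
    (Q : Matrix (Fin N) (Fin N) ℝ) (hQsymm : Q.IsSymm) (hQpos : ∀ a b, 0 < Q a b)
    (f g : Fin N → ℝ) (hf : ∀ a, f a = 0 ∨ f a = 1) (hg : ∀ a, g a = 0 ∨ g a = 1)
    (i : ℕ) (hi : Even i) :
    ∃ LF LG LFG LFF LGG : ℝ,
      Tendsto (fun s : ℕ => (Matrix.diagonal f * Q ^ s).trace / (Q ^ s).trace)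
        atTop (nhds LF) ∧
      Tendsto (fun s : ℕ => (Matrix.diagonal g * Q ^ s).trace / (Q ^ s).trace)
        atTop (nhds LG) ∧
      Tendsto (fun s : ℕ =>
          (Matrix.diagonal f * Q ^ i * Matrix.diagonal g * Q ^ s).trace /
            (Q ^ (s + i)).trace) atTop (nhds LFG) ∧
      Tendsto (fun s : ℕ =>
          (Matrix.diagonal f * Q ^ i * Matrix.diagonal f * Q ^ s).trace /
            (Q ^ (s + i)).trace) atTop (nhds LFF) ∧
      Tendsto (fun s : ℕ =>
          (Matrix.diagonal g * Q ^ i * Matrix.diagonal g * Q ^ s).trace /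
            (Q ^ (s + i)).trace) atTop (nhds LGG) ∧
      0 ≤ LFF - LF ^ 2 ∧ 0 ≤ LGG - LG ^ 2 ∧
      LFG - LF * LG ≤ Real.sqrt ((LFF - LF ^ 2) * (LGG - LG ^ 2)) := by
  classical
  have hQ : Q.IsHermitian := by
    rw [Matrix.IsHermitian]
    ext a b
    simp only [Matrix.conjTranspose_apply, star_trivial]
    conv_lhs => rw [← hQsymm]
    rfl
  set U : Matrix (Fin N) (Fin N) ℝ := (hQ.eigenvectorUnitary : Matrix (Fin N) (Fin N) ℝ)
    with hU
  set μ : Fin N → ℝ := hQ.eigenvalues with hμ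
  have hUU : star U * U = 1 := Unitary.coe_star_mul_self hQ.eigenvectorUnitary
  have hUUs : U * star U = 1 := Unitary.coe_mul_star_self hQ.eigenvectorUnitary
  have hdecomp : Q = U * Matrix.diagonal μ * star U := by
    have h := hQ.spectral_theorem
    rw [Unitary.conjStarAlgAut_apply] at h
    exact h
  have hspec : ∀ s : ℕ, Q ^ s = U * Matrix.diagonal (fun k => μ k ^ s) * star U := by
    intro s
    induction s with
    | zero =>
        simp only [pow_zero]
        have h0 : Matrix.diagonal (fun _ : Fin N => (1 : ℝ)) = 1 := Matrix.diagonal_one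
        rw [h0, mul_one, hUUs]
    | succ n ih =>
        rw [pow_succ, ih, hdecomp]
        calc U * Matrix.diagonal (fun k => μ k ^ n) * star U * (U * Matrix.diagonal μ * star U)
            = U * Matrix.diagonal (fun k => μ k ^ n) * (star U * U) * Matrix.diagonal μ * star U := by
              noncomm_ring
          _ = U * (Matrix.diagonal (fun k => μ k ^ n) * Matrix.diagonal μ) * star U := by
              rw [hUU, mul_one]
              noncomm_ring
          _ = U * Matrix.diagonal (fun k => μ k ^ (n + 1)) * star U := by
              rw [Matrix.diagonal_mul_diagonal]
              have hd : (fun k => μ k ^ n * μ k) = fun k => μ k ^ (n + 1) := by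
                funext k
                rw [pow_succ]
              rw [hd]
  have hent : ∀ (s : ℕ) (a b : Fin N), (Q ^ s) a b = ∑ k, U a k * μ k ^ s * U b k := by
    intro s a b
    rw [hspec s, Matrix.mul_apply]
    refine Finset.sum_congr rfl fun k _ => ?_
    rw [Matrix.mul_diagonal, Matrix.star_apply, star_trivial]
  have hcol : ∀ k l, ∑ a, U a k * U a l = (if k = l then (1:ℝ) else 0) := by
    intro k l
    have h := congrFun (congrFun hUU k) l
    simp only [Matrix.mul_apply, Matrix.star_apply, star_trivial] at h
    rw [h, Matrix.one_apply]
  have hrow : ∀ a b, ∑ k, U a k * U b k = (if a = b then (1:ℝ) else 0) := by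
    intro a b
    have h := congrFun (congrFun hUUs a) b
    simp only [Matrix.mul_apply, Matrix.star_apply, star_trivial] at h
    rw [h, Matrix.one_apply]
  have hent1 : ∀ a b, Q a b = ∑ k, U a k * μ k * U b k := by
    intro a b
    have h := hent 1 a b
    simpa using h
  obtain ⟨k0, hlam, hsep⟩ := aux_perron hN Q U μ hQpos hent1 hcol hrow
  have hlami : (0:ℝ) < μ k0 ^ i := pow_pos hlam i
  -- trace formula
  have htrace : ∀ (A : Matrix (Fin N) (Fin N) ℝ) (s : ℕ),
      (A * Q ^ s).trace = ∑ k, (star U * A * U) k k * μ k ^ s := by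
    intro A s
    rw [hspec s, ← mul_assoc, ← mul_assoc, Matrix.trace_mul_cycle, ← mul_assoc]
    simp [Matrix.trace, Matrix.diag, Matrix.mul_diagonal]
  have hden : ∀ s : ℕ, (Q ^ s).trace = ∑ k, (1:ℝ) * μ k ^ s := by
    intro s
    have h := htrace 1 s
    rw [one_mul] at h
    rw [h]
    refine Finset.sum_congr rfl fun k _ => ?_
    rw [mul_one, hUU, Matrix.one_apply_eq]
  have hden2 : ∀ s : ℕ, (Q ^ (s + i)).trace = ∑ k, μ k ^ i * μ k ^ s := by
    intro s
    rw [hden (s + i)]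
    exact Finset.sum_congr rfl fun k _ => by rw [one_mul, pow_add]; ring
  -- generic limit statements
  have hlim1 : ∀ A : Matrix (Fin N) (Fin N) ℝ,
      Tendsto (fun s : ℕ => (A * Q ^ s).trace / (Q ^ s).trace) atTop
        (nhds ((star U * A * U) k0 k0)) := by
    intro A
    have h := aux_ratio μ (fun k => (star U * A * U) k k) (fun _ => (1:ℝ)) k0 hlam hsep
      one_ne_zero
    rw [div_one] at h
    refine Tendsto.congr (fun s => ?_) h
    rw [← htrace A s, ← hden s]
  have hlim2 : ∀ A : Matrix (Fin N) (Fin N) ℝ,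
      Tendsto (fun s : ℕ => (A * Q ^ s).trace / (Q ^ (s + i)).trace) atTop
        (nhds ((star U * A * U) k0 k0 / μ k0 ^ i)) := by
    intro A
    have h := aux_ratio μ (fun k => (star U * A * U) k k) (fun k => μ k ^ i) k0 hlam hsep
      hlami.ne'
    refine Tendsto.congr (fun s => ?_) h
    rw [← htrace A s, ← hden2 s]
  -- diagonal entries of conjugated matrices
  have hcA : ∀ A : Matrix (Fin N) (Fin N) ℝ,
      (star U * A * U) k0 k0 = ∑ a, ∑ b, U a k0 * A a b * U b k0 := by
    intro A
    calc (star U * A * U) k0 k0 = ∑ b, (∑ a, U a k0 * A a b) * U b k0 := by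
          rw [Matrix.mul_apply]
          refine Finset.sum_congr rfl fun b _ => ?_
          have hsa : (star U * A) k0 b = ∑ a, U a k0 * A a b := by
            rw [Matrix.mul_apply]
            exact Finset.sum_congr rfl fun a _ => by rw [Matrix.star_apply, star_trivial]
          rw [hsa]
      _ = ∑ b, ∑ a, U a k0 * A a b * U b k0 := by
          refine Finset.sum_congr rfl fun b _ => by rw [Finset.sum_mul]
      _ = ∑ a, ∑ b, U a k0 * A a b * U b k0 := Finset.sum_comm
  have hcdiag : ∀ h : Fin N → ℝ, (star U * Matrix.diagonal h * U) k0 k0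
      = ∑ a, U a k0 * (h a * U a k0) := by
    intro h
    rw [hcA]
    refine Finset.sum_congr rfl fun a _ => ?_
    rw [Finset.sum_eq_single a]
    · rw [Matrix.diagonal_apply_eq]; ring
    · intro b _ hb
      rw [Matrix.diagonal_apply_ne _ (Ne.symm hb), mul_zero, zero_mul]
    · intro h'; exact absurd (Finset.mem_univ a) h'
  have hcbil : ∀ p q : Fin N → ℝ,
      (star U * (Matrix.diagonal p * Q ^ i * Matrix.diagonal q) * U) k0 k0
      = ∑ k, μ k ^ i * ((∑ a, U a k * (p a * U a k0)) * (∑ b, U b k * (q b * U b k0))) := by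
    intro p q
    rw [hcA]
    calc ∑ a, ∑ b, U a k0 * (Matrix.diagonal p * Q ^ i * Matrix.diagonal q) a b * U b k0
        = ∑ a, ∑ b, (p a * U a k0) * (Q ^ i) a b * (q b * U b k0) := by
          refine Finset.sum_congr rfl fun a _ => Finset.sum_congr rfl fun b _ => ?_
          rw [Matrix.mul_diagonal, Matrix.diagonal_mul]
          ring
      _ = _ := aux_bilin U (fun k => μ k ^ i) (Q ^ i) (hent i) _ _
  -- abbreviations
  let wx : Fin N → ℝ := fun k => ∑ a, U a k * (f a * U a k0)
  let wy : Fin N → ℝ := fun k => ∑ a, U a k * (g a * U a k0)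
  have hpow_nonneg : ∀ k, (0:ℝ) ≤ μ k ^ i := fun k => hi.pow_nonneg (μ k)
  have hsplit : ∀ w1 w2 : Fin N → ℝ, ∑ k, μ k ^ i * (w1 k * w2 k)
      = μ k0 ^ i * (w1 k0 * w2 k0) + ∑ k ∈ Finset.univ.erase k0, μ k ^ i * (w1 k * w2 k) :=
    fun w1 w2 => (Finset.add_sum_erase _ _ (Finset.mem_univ k0)).symm
  have hdiff : ∀ w1 w2 : Fin N → ℝ,
      (∑ k, μ k ^ i * (w1 k * w2 k)) / μ k0 ^ i - w1 k0 * w2 k0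
      = (∑ k ∈ Finset.univ.erase k0, μ k ^ i * (w1 k * w2 k)) / μ k0 ^ i := by
    intro w1 w2
    rw [hsplit w1 w2]
    field_simp
    ring
  have hSxx_nonneg : 0 ≤ ∑ k ∈ Finset.univ.erase k0, μ k ^ i * (wx k * wx k) :=
    Finset.sum_nonneg fun k _ => mul_nonneg (hpow_nonneg k) (mul_self_nonneg _)
  have hSyy_nonneg : 0 ≤ ∑ k ∈ Finset.univ.erase k0, μ k ^ i * (wy k * wy k) :=
    Finset.sum_nonneg fun k _ => mul_nonneg (hpow_nonneg k) (mul_self_nonneg _)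
  refine ⟨wx k0, wy k0,
    (∑ k, μ k ^ i * (wx k * wy k)) / μ k0 ^ i,
    (∑ k, μ k ^ i * (wx k * wx k)) / μ k0 ^ i,
    (∑ k, μ k ^ i * (wy k * wy k)) / μ k0 ^ i, ?_, ?_, ?_, ?_, ?_, ?_, ?_, ?_⟩
  · have h := hlim1 (Matrix.diagonal f)
    rw [hcdiag f] at h
    exact h
  · have h := hlim1 (Matrix.diagonal g)
    rw [hcdiag g] at h
    exact h
  · have h := hlim2 (Matrix.diagonal f * Q ^ i * Matrix.diagonal g)
    rw [hcbil f g] at h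
    exact h
  · have h := hlim2 (Matrix.diagonal f * Q ^ i * Matrix.diagonal f)
    rw [hcbil f f] at h
    exact h
  · have h := hlim2 (Matrix.diagonal g * Q ^ i * Matrix.diagonal g)
    rw [hcbil g g] at h
    exact h
  · rw [sq, hdiff wx wx]
    exact div_nonneg hSxx_nonneg hlami.le
  · rw [sq, hdiff wy wy]
    exact div_nonneg hSyy_nonneg hlami.le
  · rw [sq, sq, hdiff wx wx, hdiff wy wy, hdiff wx wy]
    set Sxy := ∑ k ∈ Finset.univ.erase k0, μ k ^ i * (wx k * wy k) with hSxydef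
    set Sxx := ∑ k ∈ Finset.univ.erase k0, μ k ^ i * (wx k * wx k) with hSxxdef
    set Syy := ∑ k ∈ Finset.univ.erase k0, μ k ^ i * (wy k * wy k) with hSyydef
    have hcs : Sxy ^ 2 ≤ Sxx * Syy := by
      have h := Finset.sum_mul_sq_le_sq_mul_sq (Finset.univ.erase k0)
        (fun k => Real.sqrt (μ k ^ i) * wx k) (fun k => Real.sqrt (μ k ^ i) * wy k)
      have e1 : ∑ k ∈ Finset.univ.erase k0,
          (Real.sqrt (μ k ^ i) * wx k) * (Real.sqrt (μ k ^ i) * wy k) = Sxy := by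
        refine Finset.sum_congr rfl fun k _ => ?_
        have e : (Real.sqrt (μ k ^ i) * wx k) * (Real.sqrt (μ k ^ i) * wy k)
            = (Real.sqrt (μ k ^ i) * Real.sqrt (μ k ^ i)) * (wx k * wy k) := by ring
        rw [e, Real.mul_self_sqrt (hpow_nonneg k)]
      have e2 : ∑ k ∈ Finset.univ.erase k0, (Real.sqrt (μ k ^ i) * wx k) ^ 2 = Sxx := by
        refine Finset.sum_congr rfl fun k _ => ?_
        have e : (Real.sqrt (μ k ^ i) * wx k) ^ 2
            = (Real.sqrt (μ k ^ i) * Real.sqrt (μ k ^ i)) * (wx k * wx k) := by ring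
        rw [e, Real.mul_self_sqrt (hpow_nonneg k)]
      have e3 : ∑ k ∈ Finset.univ.erase k0, (Real.sqrt (μ k ^ i) * wy k) ^ 2 = Syy := by
        refine Finset.sum_congr rfl fun k _ => ?_
        have e : (Real.sqrt (μ k ^ i) * wy k) ^ 2
            = (Real.sqrt (μ k ^ i) * Real.sqrt (μ k ^ i)) * (wy k * wy k) := by ring
        rw [e, Real.mul_self_sqrt (hpow_nonneg k)]
      rw [e1, e2, e3] at h
      exact h
    have hnn : 0 ≤ Sxx * Syy := mul_nonneg hSxx_nonneg hSyy_nonneg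
    calc Sxy / μ k0 ^ i ≤ |Sxy| / μ k0 ^ i := by gcongr; exact le_abs_self _
      _ = Real.sqrt (Sxy ^ 2) / μ k0 ^ i := by rw [Real.sqrt_sq_eq_abs]
      _ ≤ Real.sqrt (Sxx * Syy) / μ k0 ^ i := by gcongr
      _ = Real.sqrt (Sxx / μ k0 ^ i * (Syy / μ k0 ^ i)) := by
          rw [div_mul_div_comm, ← sq, Real.sqrt_div hnn, Real.sqrt_sq hlami.le]
end

section
/- Let G be a finite connected simple graph with vertex set V and at least two vertices, and let J assign to each edge e of G a strictly positive real coupling J_e > 0 (couplings are zero on non-adjacent pairs). Let ⟨·⟩ be the associated zero-field Gibbs expectation. Then for all vertices u, v ∈ V, ⟨σ_u σ_v⟩ > 0. -/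
open Finset

lemma spin_sq {V : Type*} (s : V → Bool) (p : V) : spin s p * spin s p = 1 := by
  unfold spin; cases s p <;> norm_num

lemma spin_cases {V : Type*} (s : V → Bool) (p : V) : spin s p = 1 ∨ spin s p = -1 := by
  unfold spin; cases s p <;> simp

lemma exp_pm {ε a : ℝ} (h : ε = 1 ∨ ε = -1) :
    Real.exp (ε * a) = ε * Real.sinh a + Real.cosh a := by
  rcases h with h | h <;> subst h
  · simp [add_comm, Real.sinh_add_cosh a]
  · have := Real.cosh_sub_sinh a
    simp only [neg_one_mul, neg_mul, one_mul]
    rw [← this]; ring_nf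

lemma walk_prod {V : Type*} {G : SimpleGraph V} {a b : V} (s : V → Bool) (w : G.Walk a b) :
    (w.darts.map (fun d => spin s d.toProd.1 * spin s d.toProd.2)).prod
      = spin s a * spin s b := by
  induction w with
  | nil => simp [spin_sq]
  | @cons x y z hadj w ih =>
      simp only [SimpleGraph.Walk.darts_cons, List.map_cons, List.prod_cons, ih]
      calc spin s x * spin s y * (spin s y * spin s z)
          = (spin s y * spin s y) * (spin s x * spin s z) := by ring
        _ = spin s x * spin s z := by rw [spin_sq, one_mul]

lemma prod_spin_ite {V : Type*} [Fintype V] [DecidableEq V] (s : V → Bool) (w : V) :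
    ∏ p, spin s p ^ (if w = p then 1 else 0) = spin s w := by
  have : ∀ p : V, spin s p ^ (if w = p then 1 else 0) = if w = p then spin s p else 1 := by
    intro p; split <;> simp
  simp only [this, Finset.prod_ite_eq, mem_univ, if_true]

lemma spin_prod_eq {V : Type*} [Fintype V] [DecidableEq V] (u v : V) (T : Finset (V × V))
    (s : V → Bool) :
    spin s u * spin s v * ∏ e ∈ T, (spin s e.1 * spin s e.2)
      = ∏ p, spin s p ^ ((if u = p then 1 else 0) + (if v = p then 1 else 0)
          + ∑ e ∈ T, ((if e.1 = p then 1 else 0) + (if e.2 = p then 1 else 0))) := by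
  simp only [pow_add, Finset.prod_mul_distrib, prod_spin_ite]
  congr 1
  have : ∀ p : V, spin s p ^ (∑ e ∈ T, ((if e.1 = p then 1 else 0) + (if e.2 = p then 1 else 0)))
      = ∏ e ∈ T, spin s p ^ ((if e.1 = p then 1 else 0) + (if e.2 = p then 1 else 0)) :=
    fun p => (Finset.prod_pow_eq_pow_sum T _ _).symm
  simp only [this]
  rw [Finset.prod_comm]
  simp only [pow_add, Finset.prod_mul_distrib, prod_spin_ite]

lemma sum_spin_prod_nonneg {V : Type*} [Fintype V] [DecidableEq V] (u v : V)
    (T : Finset (V × V)) :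
    0 ≤ ∑ s : V → Bool, spin s u * spin s v * ∏ e ∈ T, (spin s e.1 * spin s e.2) := by
  classical
  set d : V → ℕ := fun p => (if u = p then 1 else 0) + (if v = p then 1 else 0)
      + ∑ e ∈ T, ((if e.1 = p then 1 else 0) + (if e.2 = p then 1 else 0)) with hd
  have h1 : ∀ s : V → Bool, spin s u * spin s v * ∏ e ∈ T, (spin s e.1 * spin s e.2)
      = ∏ p, (fun b : Bool => (if b then (1:ℝ) else -1) ^ d p) (s p) := by
    intro s
    rw [spin_prod_eq]
    rfl
  simp only [h1]
  rw [← Fintype.piFinset_univ,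
    Finset.sum_prod_piFinset (univ : Finset Bool) (fun p b => (if b then (1:ℝ) else -1) ^ d p)]
  apply Finset.prod_nonneg
  intro p _
  rw [Fintype.sum_bool]
  norm_num
  rcases Nat.even_or_odd (d p) with h | h
  · rw [h.neg_one_pow]; norm_num
  · rw [h.neg_one_pow]; norm_num

lemma weight_factor {V : Type*} [Fintype V] [DecidableEq V] (J : V → V → ℝ)
    (hdiag : ∀ p, J p p = 0) (s : V → Bool) :
    zfWeight J s = ∏ e ∈ univ.offDiag,
      (spin s e.1 * spin s e.2 * Real.sinh (J e.1 e.2 / 2) + Real.cosh (J e.1 e.2 / 2)) := by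
  unfold zfWeight
  have h1 : ∑ p, ∑ q, J p q * spin s p * spin s q
      = ∑ e ∈ univ ×ˢ univ, J e.1 e.2 * spin s e.1 * spin s e.2 := by
    rw [Finset.sum_product]
  have hfilter : (univ ×ˢ univ).filter (fun e : V × V => e.1 ≠ e.2) = univ.offDiag := by
    ext e; simp [Finset.mem_offDiag]
  have h2 : ∑ e ∈ univ ×ˢ univ, J e.1 e.2 * spin s e.1 * spin s e.2
      = ∑ e ∈ univ.offDiag, J e.1 e.2 * spin s e.1 * spin s e.2 := by
    rw [← Finset.sum_filter_add_sum_filter_not (univ ×ˢ univ) (fun e : V × V => e.1 ≠ e.2),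
      hfilter]
    have : ∑ e ∈ (univ ×ˢ univ).filter (fun e : V × V => ¬ e.1 ≠ e.2),
        J e.1 e.2 * spin s e.1 * spin s e.2 = 0 := by
      apply Finset.sum_eq_zero
      intro e he
      simp only [Finset.mem_filter, not_not] at he
      rw [← he.2, hdiag]; ring
    rw [this, add_zero]
  rw [h1, h2, Finset.mul_sum]
  have h3 : ∀ e : V × V, (1/2 : ℝ) * (J e.1 e.2 * spin s e.1 * spin s e.2)
      = (spin s e.1 * spin s e.2) * (J e.1 e.2 / 2) := by intro e; ring
  simp only [h3]
  rw [Real.exp_sum]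
  apply Finset.prod_congr rfl
  intro e _
  exact exp_pm (by rcases spin_cases s e.1 with h | h <;> rcases spin_cases s e.2 with h' | h' <;>
    simp [h, h'])

/-- On a finite connected graph with strictly positive ferromagnetic couplings,
all two-point functions `⟨σ_u σ_v⟩` are strictly positive. -/
theorem two_point_positive {V : Type*} [Fintype V] [DecidableEq V]
    (hcard : 2 ≤ Fintype.card V)
    (G : SimpleGraph V) (hconn : G.Connected)
    (J : V → V → ℝ)
    (hsymm : ∀ p q, J p q = J q p)
    (hzero : ∀ p q, ¬G.Adj p q → J p q = 0)
    (hpos : ∀ p q, G.Adj p q → 0 < J p q)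
    (u v : V) :
    0 < zfExpect J (fun σ => σ u * σ v) := by
  classical
  have hdiag : ∀ p, J p p = 0 := fun p => hzero p p (G.loopless.irrefl p)
  have hJnonneg : ∀ p q : V, 0 ≤ J p q := by
    intro p q
    by_cases h : G.Adj p q
    · exact (hpos p q h).le
    · rw [hzero p q h]
  unfold zfExpect
  apply div_pos
  swap
  · exact Finset.sum_pos (fun s _ => Real.exp_pos _) ⟨fun _ => true, mem_univ _⟩
  -- numerator
  have hrw : ∀ s : V → Bool,
      (fun σ : V → ℝ => σ u * σ v) (spin s) * zfWeight J s
        = ∑ T ∈ (univ.offDiag : Finset (V × V)).powerset,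
          ((∏ e ∈ T, Real.sinh (J e.1 e.2 / 2)) * ∏ e ∈ univ.offDiag \ T, Real.cosh (J e.1 e.2 / 2))
          * (spin s u * spin s v * ∏ e ∈ T, (spin s e.1 * spin s e.2)) := by
    intro s
    rw [weight_factor J hdiag s, Finset.prod_add, Finset.mul_sum]
    apply Finset.sum_congr rfl
    intro T _
    rw [Finset.prod_mul_distrib]
    ring
  simp only [hrw]
  rw [Finset.sum_comm]
  have hterm : ∀ T : Finset (V × V),
      ∑ s : V → Bool,
        ((∏ e ∈ T, Real.sinh (J e.1 e.2 / 2)) * ∏ e ∈ univ.offDiag \ T, Real.cosh (J e.1 e.2 / 2))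
          * (spin s u * spin s v * ∏ e ∈ T, (spin s e.1 * spin s e.2))
      = ((∏ e ∈ T, Real.sinh (J e.1 e.2 / 2)) * ∏ e ∈ univ.offDiag \ T, Real.cosh (J e.1 e.2 / 2))
          * ∑ s : V → Bool, (spin s u * spin s v * ∏ e ∈ T, (spin s e.1 * spin s e.2)) := by
    intro T
    rw [Finset.mul_sum]
  simp only [hterm]
  -- the path from u to v
  obtain ⟨w⟩ := hconn.preconnected u v
  set q : G.Walk u v := (w.toPath : G.Path u v).1 with hq
  have hqpath : q.IsPath := w.toPath.2
  set L : List (V × V) := q.darts.map SimpleGraph.Dart.toProd with hL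
  have hLnodup : L.Nodup :=
    (q.darts_nodup_of_support_nodup hqpath.support_nodup).map SimpleGraph.Dart.toProd_injective
  set T₀ : Finset (V × V) := L.toFinset with hT₀
  have hT₀adj : ∀ e ∈ T₀, G.Adj e.1 e.2 := by
    intro e he
    rw [hT₀, List.mem_toFinset, hL, List.mem_map] at he
    obtain ⟨d, _, rfl⟩ := he
    exact d.adj
  have hT₀mem : T₀ ∈ (univ.offDiag : Finset (V × V)).powerset := by
    rw [Finset.mem_powerset]
    intro e he
    exact Finset.mem_offDiag.mpr ⟨mem_univ _, mem_univ _, (hT₀adj e he).ne⟩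
  apply Finset.sum_pos'
  · intro T hT
    apply mul_nonneg
    · apply mul_nonneg
      · exact Finset.prod_nonneg fun e _ =>
          Real.sinh_nonneg_iff.mpr (by linarith [hJnonneg e.1 e.2])
      · exact Finset.prod_nonneg fun e _ => (Real.cosh_pos _).le
    · exact sum_spin_prod_nonneg u v T
  · refine ⟨T₀, hT₀mem, ?_⟩
    apply mul_pos
    · apply mul_pos
      · exact Finset.prod_pos fun e he =>
          Real.sinh_pos_iff.mpr (by linarith [hpos e.1 e.2 (hT₀adj e he)])
      · exact Finset.prod_pos fun e _ => Real.cosh_pos _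
    · have hconst : ∀ s : V → Bool,
          spin s u * spin s v * ∏ e ∈ T₀, (spin s e.1 * spin s e.2) = 1 := by
        intro s
        have hprod : ∏ e ∈ T₀, (spin s e.1 * spin s e.2) = spin s u * spin s v := by
          rw [hT₀, List.prod_toFinset _ hLnodup, hL, List.map_map]
          exact walk_prod s q
        rw [hprod]
        calc spin s u * spin s v * (spin s u * spin s v)
            = (spin s u * spin s u) * (spin s v * spin s v) := by ring
          _ = 1 := by rw [spin_sq, spin_sq, one_mul]
      simp only [hconst]
      rw [Finset.sum_const, card_univ, nsmul_eq_mul, mul_one]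
      exact_mod_cast Nat.cast_pos.mpr Fintype.card_pos
end
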